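/- arXiv:2007.11492 — 8 statements merged into one kernel-verified Lean document; each statement's English description precedes it below -/
import Mathlib

section
/- For every natural number ν and every natural number i, the following identity holds: ∑_{k=0}^{2ν} (−1)^k · C(2ν+i, k+i) · 2^{−k} · C(2k, k) = π · (2ν+1)_i · (2^{2i} · i!)/(2i)! · ∑_{r=0}^{i} [2^{−r} · C(i, r) · (1/2 + (i−r)/2)_ν] / [(i−r)! · Γ(1/2 + (r−i)/2)² · (1 + (i−r)/2)_ν], where all sums and products are taken over real numbers. -/
open Real Finset

/- ====================================================================
   Auxiliary development.

   Key players: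
   `TT n i` = coefficient of `X^(n+i)` in `(1+X²)^n (1+X)^(2i)`;
   `SS n i` = ∑_{k=0}^{n} (-1)^k C(n+i,k+i) C(2k,k) 2^(n-k).
   The combinatorial core is `Mlem : C(2i,i)·SS n i = C(n+i,i)·TT n i`,
   proven by a double induction using the contiguous relation
   `TT n (i+1) = 2 TT n i + TT (n+1) i` and the Zeilberger-type recurrence
   `(n+2+j) TT (n+2) j = 2j TT (n+1) j + 4(n+1) TT n j`.
   ==================================================================== -/

noncomputable def TT (n i : ℕ) : ℝ :=
  (((1 + Polynomial.X ^ 2) ^ n * (1 + Polynomial.X) ^ (2 * i) : Polynomial ℝ)).coeff (n + i)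

noncomputable def SS (n i : ℕ) : ℝ :=
  ∑ k ∈ range (n + 1),
    (-1 : ℝ) ^ k * ((n + i).choose (k + i)) * ((2 * k).choose k) * 2 ^ n / 2 ^ k

lemma coeff_one_add_X_sq_pow (n k : ℕ) :
    ((1 + Polynomial.X ^ 2) ^ n : Polynomial ℝ).coeff k
      = if k % 2 = 0 then (n.choose (k / 2) : ℝ) else 0 := by
  rw [show ((1 : Polynomial ℝ) + Polynomial.X ^ 2) = Polynomial.X ^ 2 + 1 by ring, add_pow,
    Polynomial.finset_sum_coeff]
  simp only [one_pow, mul_one, ← pow_mul, Polynomial.coeff_mul_natCast, Polynomial.coeff_X_pow,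
    ite_mul, zero_mul, one_mul]
  rcases Nat.even_or_odd k with ⟨m, rfl⟩ | ⟨m, rfl⟩
  · rw [if_pos (by omega), show (m + m) / 2 = m by omega]
    by_cases hm : m ≤ n
    · rw [Finset.sum_eq_single m]
      · rw [if_pos (by omega)]
      · intro b _ hb; rw [if_neg (by omega)]
      · intro h; exact absurd (Finset.mem_range.2 (by omega)) h
    · rw [Finset.sum_eq_zero, Nat.choose_eq_zero_of_lt (by omega), Nat.cast_zero]
      intro b hb; simp only [Finset.mem_range] at hb; rw [if_neg (by omega)]
  · rw [if_neg (by omega), Finset.sum_eq_zero]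
    intro b _; rw [if_neg (by omega)]

lemma TT_rec (n i : ℕ) : TT n (i + 1) = 2 * TT n i + TT (n + 1) i := by
  have h : ((1 + Polynomial.X ^ 2) ^ n * (1 + Polynomial.X) ^ (2 * (i+1)) : Polynomial ℝ)
      = (Polynomial.X * ((1 + Polynomial.X ^ 2) ^ n * (1 + Polynomial.X) ^ (2*i))
        + Polynomial.X * ((1 + Polynomial.X ^ 2) ^ n * (1 + Polynomial.X) ^ (2*i)))
        + (1 + Polynomial.X ^ 2) ^ (n+1) * (1 + Polynomial.X) ^ (2 * i) := by
    rw [show 2*(i+1) = 2*i + 2 by ring]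
    ring
  simp only [TT]
  rw [h, Polynomial.coeff_add, Polynomial.coeff_add,
    show n + (i+1) = (n+i)+1 from rfl, Polynomial.coeff_X_mul,
    show n + i + 1 = n + 1 + i by ring]
  ring

lemma TT_zero_right (n : ℕ) : TT n 0 = if n % 2 = 0 then (n.choose (n / 2) : ℝ) else 0 := by
  simp only [TT, mul_zero, pow_zero, mul_one, add_zero]
  exact coeff_one_add_X_sq_pow n n

lemma TT_zero_left (i : ℕ) : TT 0 i = ((2 * i).choose i : ℝ) := by
  simp only [TT, pow_zero, one_mul, zero_add]
  rw [show ((1 : Polynomial ℝ) + Polynomial.X) = Polynomial.X + 1 by ring,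
    Polynomial.coeff_X_add_one_pow]

lemma SS_zero_left (i : ℕ) : SS 0 i = 1 := by
  simp [SS]

lemma SS_rec (n i : ℕ) : SS (n + 1) (i + 1) = 2 * SS n (i + 1) + SS (n + 1) i := by
  have key : ∀ k, ((n + 1 + (i + 1)).choose (k + (i + 1)) : ℝ)
      = ((n + (i+1)).choose (k + (i+1)) : ℝ) + ((n + 1 + i).choose (k + i) : ℝ) := by
    intro k
    have : (n + 1 + (i + 1)).choose (k + (i + 1)) = (n + i + 1).choose (k + i)
        + (n + i + 1).choose (k + i + 1) := by
      rw [show n + 1 + (i+1) = (n+i+1) + 1 by ring, show k + (i+1) = (k+i) + 1 by ring]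
      exact Nat.choose_succ_succ _ _
    rw [this]
    push_cast
    rw [show n + (i+1) = n + i + 1 by ring, show n + 1 + i = n + i + 1 by ring]
    ring
  simp only [SS]
  have expand : ∑ k ∈ range (n + 2),
      (-1 : ℝ) ^ k * ((n + 1 + (i+1)).choose (k + (i+1))) * ((2 * k).choose k) * 2 ^ (n+1) / 2 ^ k
      = (∑ k ∈ range (n + 2),
          (-1 : ℝ) ^ k * ((n + (i+1)).choose (k + (i+1))) * ((2 * k).choose k) * 2 ^ (n+1) / 2 ^ k)
        + ∑ k ∈ range (n + 2),
          (-1 : ℝ) ^ k * ((n + 1 + i).choose (k + i)) * ((2 * k).choose k) * 2 ^ (n+1) / 2 ^ k := by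
    rw [← Finset.sum_add_distrib]
    apply Finset.sum_congr rfl
    intro k _
    rw [key k]
    ring
  rw [expand]
  congr 1
  · rw [Finset.sum_range_succ, Nat.choose_eq_zero_of_lt (by omega)]
    simp only [Nat.cast_zero, mul_zero, zero_mul, zero_div, add_zero]
    rw [Finset.mul_sum]
    apply Finset.sum_congr rfl
    intro k _
    rw [pow_succ]
    ring

lemma SS_knuth (n : ℕ) : SS n 0 = TT n 0 := by
  have base : ((-(1 + Polynomial.X) ^ 2 + 2 * Polynomial.X : Polynomial ℝ))
      = -(1 + Polynomial.X ^ 2) := by ring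
  have pid : ∑ k ∈ range (n + 1),
      ((-(1 + Polynomial.X) ^ 2 : Polynomial ℝ)) ^ k * (2 * Polynomial.X) ^ (n - k)
        * ((n.choose k : ℕ) : Polynomial ℝ)
      = (-(1 + Polynomial.X ^ 2) : Polynomial ℝ) ^ n := by
    rw [← add_pow, base]
  have hterm : ∀ k, ((-(1 + Polynomial.X) ^ 2 : Polynomial ℝ)) ^ k * (2 * Polynomial.X) ^ (n - k)
        * ((n.choose k : ℕ) : Polynomial ℝ)
      = Polynomial.C ((-1 : ℝ) ^ k * 2 ^ (n - k) * (n.choose k : ℝ))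
          * ((1 + Polynomial.X) ^ (2 * k) * Polynomial.X ^ (n - k)) := by
    intro k
    rw [neg_pow, map_mul, map_mul, map_pow, map_pow, Polynomial.C_neg, Polynomial.C_1, map_ofNat,
      Polynomial.C_eq_natCast, pow_mul]
    ring
  have lcoeff : (∑ k ∈ range (n + 1),
      ((-(1 + Polynomial.X) ^ 2 : Polynomial ℝ)) ^ k * (2 * Polynomial.X) ^ (n - k)
        * ((n.choose k : ℕ) : Polynomial ℝ)).coeff n
      = ∑ k ∈ range (n + 1),
        (-1 : ℝ) ^ k * 2 ^ (n - k) * (n.choose k : ℝ) * ((2 * k).choose k : ℝ) := by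
    rw [Polynomial.finset_sum_coeff]
    apply Finset.sum_congr rfl
    intro k hk
    simp only [Finset.mem_range] at hk
    rw [hterm k, Polynomial.coeff_C_mul, Polynomial.coeff_mul_X_pow', if_pos (by omega),
      show n - (n - k) = k by omega,
      show ((1:Polynomial ℝ) + Polynomial.X) = Polynomial.X + 1 by ring,
      Polynomial.coeff_X_add_one_pow]
  have rcoeff : ((-(1 + Polynomial.X ^ 2) : Polynomial ℝ) ^ n).coeff n
      = (-1 : ℝ) ^ n * ((1 + Polynomial.X ^ 2 : Polynomial ℝ) ^ n).coeff n := by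
    rw [neg_pow]
    rw [show ((-1 : Polynomial ℝ)) ^ n * (1 + Polynomial.X ^ 2) ^ n
      = Polynomial.C ((-1 : ℝ) ^ n) * (1 + Polynomial.X ^ 2) ^ n by
        rw [map_pow, Polynomial.C_neg, Polynomial.C_1], Polynomial.coeff_C_mul]
  have key : ∑ k ∈ range (n + 1),
        (-1 : ℝ) ^ k * 2 ^ (n - k) * (n.choose k : ℝ) * ((2 * k).choose k : ℝ)
      = (-1 : ℝ) ^ n * ((1 + Polynomial.X ^ 2 : Polynomial ℝ) ^ n).coeff n := by
    rw [← lcoeff, ← rcoeff, pid]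
  have hSS : SS n 0 = ∑ k ∈ range (n + 1),
      (-1 : ℝ) ^ k * 2 ^ (n - k) * (n.choose k : ℝ) * ((2 * k).choose k : ℝ) := by
    unfold SS
    apply Finset.sum_congr rfl
    intro k hk
    simp only [Finset.mem_range] at hk
    simp only [add_zero]
    rw [div_eq_iff (by positivity : (2:ℝ)^k ≠ 0)]
    have h2 : (2:ℝ)^(n-k) * 2^k = 2^n := by rw [← pow_add]; congr 1; omega
    rw [← h2]
    ring
  have hTT : TT n 0 = ((1 + Polynomial.X ^ 2 : Polynomial ℝ) ^ n).coeff n := by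
    simp [TT]
  rw [hSS, key, hTT]
  rcases Nat.even_or_odd n with he | ho
  · rw [he.neg_one_pow, one_mul]
  · obtain ⟨m, rfl⟩ := ho
    rw [coeff_one_add_X_sq_pow, if_neg (by omega)]
    simp

lemma TTz_base (n : ℕ) : ((n : ℝ) + 2) * TT (n + 2) 0 = 4 * ((n : ℝ) + 1) * TT n 0 := by
  rcases Nat.even_or_odd n with ⟨m, rfl⟩ | ⟨m, rfl⟩
  · rw [TT_zero_right, TT_zero_right, if_pos (by omega), if_pos (by omega),
      show (m + m + 2) / 2 = m + 1 by omega, show (m + m) / 2 = m by omega,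
      show m + m + 2 = 2 * m + 2 by ring, show m + m = 2 * m by ring]
    have h1 := Nat.add_one_mul_choose_eq (2 * m + 1) m
    have h2 := Nat.add_one_mul_choose_eq (2 * m) m
    have h3 : Nat.choose (2 * m + 1) m = Nat.choose (2 * m + 1) (m + 1) := by
      rw [← Nat.choose_symm (show m + 1 ≤ 2 * m + 1 by omega)]
      congr 1
      omega
    have h1' : ((2 * m + 2 : ℕ) : ℝ) * ((2 * m + 1).choose m : ℝ)
        = ((2 * m + 2).choose (m + 1) : ℝ) * ((m + 1 : ℕ) : ℝ) := by exact_mod_cast h1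
    have h2' : ((2 * m + 1 : ℕ) : ℝ) * ((2 * m).choose m : ℝ)
        = ((2 * m + 1).choose (m + 1) : ℝ) * ((m + 1 : ℕ) : ℝ) := by exact_mod_cast h2
    have h3' : (((2 * m + 1).choose m : ℕ) : ℝ) = ((2 * m + 1).choose (m + 1) : ℝ) := by
      exact_mod_cast h3
    push_cast at h1' h2' h3' ⊢
    apply mul_left_cancel₀ (show ((m : ℝ) + 1) ^ 2 ≠ 0 by positivity)
    linear_combination (-(((m : ℝ) + 1) * (2 * (m : ℝ) + 2))) * h1'
      + (-4 * ((m : ℝ) + 1) ^ 2) * h2' + ((m : ℝ) + 1) * (2 * (m : ℝ) + 2) ^ 2 * h3'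
  · rw [TT_zero_right, TT_zero_right, if_neg (by omega), if_neg (by omega)]
    ring

lemma TTz : ∀ j n : ℕ, ((n : ℝ) + 2 + j) * TT (n + 2) j
    = 2 * j * TT (n + 1) j + 4 * ((n : ℝ) + 1) * TT n j := by
  intro j
  induction j with
  | zero => intro n; simpa using TTz_base n
  | succ j ih =>
    intro n
    have e1 := TT_rec (n + 2) j
    have e2 := TT_rec (n + 1) j
    have e3 := TT_rec n j
    have i1 := ih n
    have i2 := ih (n + 1)
    push_cast at i2 ⊢
    rw [e1, e2, e3, show n + 2 + 1 = n + 1 + 2 by ring, show n + 1 + 1 = n + 2 by ring]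
    linear_combination 2 * i1 + i2

lemma Tdag (n i : ℕ) : ((n : ℝ) + 2 + i) * TT (n + 1) (i + 1)
    = 2 * ((n : ℝ) + 1) * TT n (i + 1) + 2 * (2 * (i : ℝ) + 1) * TT (n + 1) i := by
  rw [TT_rec (n + 1) i, TT_rec n i, show n + 1 + 1 = n + 2 by ring]
  linear_combination TTz i n

lemma Mlem : ∀ i n : ℕ, ((2 * i).choose i : ℝ) * SS n i = ((n + i).choose i : ℝ) * TT n i := by
  intro i
  induction i with
  | zero => intro n; simpa using SS_knuth n
  | succ i ih =>
    intro n
    induction n with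
    | zero =>
      rw [SS_zero_left, TT_zero_left]
      simp
    | succ n ihn =>
      have c1 : ((n : ℝ) + 1) * ((n + i + 2).choose (i + 1) : ℝ)
          = ((n : ℝ) + (i : ℝ) + 2) * ((n + i + 1).choose (i + 1) : ℝ) := by
        have s1 := Nat.add_one_mul_choose_eq (n + i + 1) n
        have s2 : Nat.choose (n + i + 1) n = Nat.choose (n + i + 1) (i + 1) := by
          rw [← Nat.choose_symm (show i + 1 ≤ n + i + 1 by omega)]; congr 1; omega
        have s3 : Nat.choose (n + i + 2) (n + 1) = Nat.choose (n + i + 2) (i + 1) := by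
          rw [← Nat.choose_symm (show i + 1 ≤ n + i + 2 by omega)]; congr 1; omega
        have s1' : ((n + i + 2 : ℕ) : ℝ) * ((n + i + 1).choose n : ℝ)
            = ((n + i + 2).choose (n + 1) : ℝ) * ((n + 1 : ℕ) : ℝ) := by exact_mod_cast s1
        have s2' : (((n + i + 1).choose n : ℕ) : ℝ) = ((n + i + 1).choose (i + 1) : ℝ) := by
          exact_mod_cast s2
        have s3' : (((n + i + 2).choose (n + 1) : ℕ) : ℝ) = ((n + i + 2).choose (i + 1) : ℝ) := by
          exact_mod_cast s3
        push_cast at s1' s2' s3'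
        linear_combination (-1 : ℝ) * s1' + ((n : ℝ) + (i : ℝ) + 2) * s2' + (-((n : ℝ) + 1)) * s3'
      have c2 : ((i : ℝ) + 1) * ((2 * i + 2).choose (i + 1) : ℝ)
          = 2 * (2 * (i : ℝ) + 1) * ((2 * i).choose i : ℝ) := by
        have h1 := Nat.add_one_mul_choose_eq (2 * i + 1) i
        have h2 := Nat.add_one_mul_choose_eq (2 * i) i
        have h3 : Nat.choose (2 * i + 1) i = Nat.choose (2 * i + 1) (i + 1) := by
          rw [← Nat.choose_symm (show i + 1 ≤ 2 * i + 1 by omega)]; congr 1; omega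
        have h1' : ((2 * i + 2 : ℕ) : ℝ) * ((2 * i + 1).choose i : ℝ)
            = ((2 * i + 2).choose (i + 1) : ℝ) * ((i + 1 : ℕ) : ℝ) := by exact_mod_cast h1
        have h2' : ((2 * i + 1 : ℕ) : ℝ) * ((2 * i).choose i : ℝ)
            = ((2 * i + 1).choose (i + 1) : ℝ) * ((i + 1 : ℕ) : ℝ) := by exact_mod_cast h2
        have h3' : (((2 * i + 1).choose i : ℕ) : ℝ) = ((2 * i + 1).choose (i + 1) : ℝ) := by
          exact_mod_cast h3
        push_cast at h1' h2' h3'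
        linear_combination (-1 : ℝ) * h1' + (-2 : ℝ) * h2' + (2 * (i : ℝ) + 2) * h3'
      have c3 : ((i : ℝ) + 1) * ((n + i + 1).choose (i + 1) : ℝ)
          = ((n : ℝ) + 1) * ((n + i + 1).choose i : ℝ) := by
        have h1 := Nat.add_one_mul_choose_eq (n + i) i
        have h2 := Nat.add_one_mul_choose_eq (n + i) n
        have h3 : Nat.choose (n + i) n = Nat.choose (n + i) i := by
          rw [← Nat.choose_symm (show i ≤ n + i by omega)]; congr 1; omega
        have h4 : Nat.choose (n + i + 1) (n + 1) = Nat.choose (n + i + 1) i := by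
          rw [← Nat.choose_symm (show i ≤ n + i + 1 by omega)]; congr 1; omega
        have h1' : ((n + i + 1 : ℕ) : ℝ) * ((n + i).choose i : ℝ)
            = ((n + i + 1).choose (i + 1) : ℝ) * ((i + 1 : ℕ) : ℝ) := by exact_mod_cast h1
        have h2' : ((n + i + 1 : ℕ) : ℝ) * ((n + i).choose n : ℝ)
            = ((n + i + 1).choose (n + 1) : ℝ) * ((n + 1 : ℕ) : ℝ) := by exact_mod_cast h2
        have h3' : (((n + i).choose n : ℕ) : ℝ) = ((n + i).choose i : ℝ) := by exact_mod_cast h3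
        have h4' : (((n + i + 1).choose (n + 1) : ℕ) : ℝ) = ((n + i + 1).choose i : ℝ) := by
          exact_mod_cast h4
        push_cast at h1' h2' h3' h4'
        linear_combination (-1 : ℝ) * h1' + h2' + (-((n : ℝ) + (i : ℝ) + 1)) * h3'
          + ((n : ℝ) + 1) * h4'
      have e1 := SS_rec n i
      have e2 : ((2 * i).choose i : ℝ) * SS (n + 1) i
          = ((n + i + 1).choose i : ℝ) * TT (n + 1) i := by
        rw [show n + i + 1 = n + 1 + i by ring]; exact ih (n + 1)
      have e3 : ((2 * i + 2).choose (i + 1) : ℝ) * SS n (i + 1)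
          = ((n + i + 1).choose (i + 1) : ℝ) * TT n (i + 1) := by
        rw [show 2 * i + 2 = 2 * (i + 1) by ring, show n + i + 1 = n + (i + 1) by ring]
        exact ihn
      have e4 := Tdag n i
      rw [show 2 * (i + 1) = 2 * i + 2 by ring, show n + 1 + (i + 1) = n + i + 2 by ring]
      apply mul_left_cancel₀
        (show ((n : ℝ) + 1) * ((i : ℝ) + 1) ≠ 0 by positivity)
      linear_combination ((n : ℝ) + 1) * ((i : ℝ) + 1) * ((2 * i + 2).choose (i + 1) : ℝ) * e1
        + 2 * ((n : ℝ) + 1) * ((i : ℝ) + 1) * e3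
        + ((n : ℝ) + 1) * SS (n + 1) i * c2
        + 2 * (2 * (i : ℝ) + 1) * ((n : ℝ) + 1) * e2
        - 2 * (2 * (i : ℝ) + 1) * TT (n + 1) i * c3
        - ((i : ℝ) + 1) * ((n + i + 1).choose (i + 1) : ℝ) * e4
        - ((i : ℝ) + 1) * TT (n + 1) (i + 1) * c1

lemma TT_expand (n i : ℕ) : TT n i = ∑ s ∈ range (i + 1),
    (if (n + i - s) % 2 = 0 then
      (i.choose s : ℝ) * 2 ^ s * ((n + i - s).choose ((n + i - s) / 2) : ℝ) else 0) := by
  have hQ : ((1 + Polynomial.X ^ 2) ^ n * (1 + Polynomial.X) ^ (2 * i) : Polynomial ℝ)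
      = ∑ s ∈ range (i + 1), Polynomial.C ((2 : ℝ) ^ s * (i.choose s : ℝ))
          * ((1 + Polynomial.X ^ 2) ^ (n + i - s) * Polynomial.X ^ s) := by
    rw [pow_mul, show ((1 + Polynomial.X : Polynomial ℝ)) ^ 2
        = 2 * Polynomial.X + (1 + Polynomial.X ^ 2) by ring,
      add_pow (2 * Polynomial.X) (1 + Polynomial.X ^ 2) i, Finset.mul_sum]
    apply Finset.sum_congr rfl
    intro s hs
    simp only [Finset.mem_range] at hs
    rw [show n + i - s = n + (i - s) by omega, pow_add, map_mul, map_pow, map_ofNat,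
      Polynomial.C_eq_natCast, mul_pow]
    ring
  unfold TT
  rw [hQ, Polynomial.finset_sum_coeff]
  apply Finset.sum_congr rfl
  intro s hs
  simp only [Finset.mem_range] at hs
  rw [Polynomial.coeff_C_mul, Polynomial.coeff_mul_X_pow', if_pos (by omega),
    coeff_one_add_X_sq_pow]
  split_ifs with h
  · ring
  · rw [mul_zero]

lemma gamma_sq (m : ℕ) : (Real.Gamma ((1 : ℝ) / 2 - m)) ^ 2
    = π * 16 ^ m * ((m.factorial : ℝ)) ^ 2 / (((2 * m).factorial : ℝ)) ^ 2 := by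
  induction m with
  | zero =>
    simp only [Nat.cast_zero, sub_zero]
    rw [Real.Gamma_one_half_eq, Real.sq_sqrt Real.pi_pos.le]
    norm_num
  | succ m ih =>
    have hx : (1 : ℝ) / 2 - ((m : ℝ) + 1) ≠ 0 := by
      have : (0 : ℝ) ≤ m := Nat.cast_nonneg m
      intro h; nlinarith
    have h := Real.Gamma_add_one hx
    have harg : (1 : ℝ) / 2 - ((m : ℝ) + 1) + 1 = 1 / 2 - m := by ring
    rw [harg] at h
    have hsq : (Real.Gamma ((1 : ℝ) / 2 - m)) ^ 2
        = ((1 : ℝ) / 2 - ((m : ℝ) + 1)) ^ 2 * (Real.Gamma ((1 : ℝ) / 2 - ((m : ℝ) + 1))) ^ 2 := by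
      rw [h]; ring
    rw [ih] at hsq
    have hcast : ((m : ℝ) + 1) = (((m + 1 : ℕ) : ℝ)) := by push_cast; ring
    have hne : ((1 : ℝ) / 2 - ((m : ℝ) + 1)) ^ 2 ≠ 0 := pow_ne_zero _ hx
    have hfac1 : ((2 * (m + 1)).factorial : ℝ)
        = ((2 * m).factorial : ℝ) * (2 * (m : ℝ) + 1) * (2 * (m : ℝ) + 2) := by
      rw [show 2 * (m + 1) = (2 * m + 1) + 1 by ring, Nat.factorial_succ, Nat.factorial_succ]
      push_cast; ring
    have hfac2 : ((m + 1).factorial : ℝ) = (m.factorial : ℝ) * ((m : ℝ) + 1) := by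
      rw [Nat.factorial_succ]; push_cast; ring
    have hf0 : ((2 * m).factorial : ℝ) ≠ 0 := Nat.cast_ne_zero.2 (Nat.factorial_ne_zero _)
    have hm0 : ((m.factorial : ℝ)) ≠ 0 := Nat.cast_ne_zero.2 (Nat.factorial_ne_zero _)
    apply mul_left_cancel₀ hne
    push_cast
    rw [← hsq, hfac1, hfac2, pow_succ (16 : ℝ) m]
    have h1 : (2 * (m : ℝ) + 1) ≠ 0 := by positivity
    have h2 : (2 * (m : ℝ) + 2) ≠ 0 := by positivity
    field_simp
    ring

lemma asc_half (m : ℕ) : ∀ ν : ℕ, (ascPochhammer ℝ ν).eval ((1 : ℝ) / 2 + m)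
    = ((2 * (m + ν)).factorial : ℝ) * (m.factorial : ℝ)
      / (((2 * m).factorial : ℝ) * ((m + ν).factorial : ℝ) * 4 ^ ν) := by
  intro ν
  induction ν with
  | zero =>
    simp only [ascPochhammer_zero, Polynomial.eval_one, add_zero, pow_zero, mul_one]
    rw [div_self]
    positivity
  | succ ν ih =>
    rw [ascPochhammer_succ_right, Polynomial.eval_mul, Polynomial.eval_add, Polynomial.eval_X,
      Polynomial.eval_natCast, ih]
    have hf1 : ((2 * (m + (ν + 1))).factorial : ℝ)
        = ((2 * (m + ν)).factorial : ℝ) * (2 * (m : ℝ) + 2 * ν + 1) * (2 * (m : ℝ) + 2 * ν + 2) := by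
      rw [show 2 * (m + (ν + 1)) = (2 * (m + ν) + 1) + 1 by ring, Nat.factorial_succ,
        Nat.factorial_succ]
      push_cast; ring
    have hf2 : ((m + (ν + 1)).factorial : ℝ) = ((m + ν).factorial : ℝ) * ((m : ℝ) + ν + 1) := by
      rw [show m + (ν + 1) = (m + ν) + 1 by ring, Nat.factorial_succ]
      push_cast; ring
    rw [hf1, hf2, pow_succ (4 : ℝ) ν]
    have h1 : ((2 * m).factorial : ℝ) ≠ 0 := Nat.cast_ne_zero.2 (Nat.factorial_ne_zero _)
    have h2 : ((m + ν).factorial : ℝ) ≠ 0 := Nat.cast_ne_zero.2 (Nat.factorial_ne_zero _)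
    have h3 : ((m : ℝ) + ν + 1) ≠ 0 := by positivity
    field_simp
    ring

lemma asc_one (m : ℕ) : ∀ ν : ℕ, (ascPochhammer ℝ ν).eval ((1 : ℝ) + m)
    = ((m + ν).factorial : ℝ) / (m.factorial : ℝ) := by
  intro ν
  induction ν with
  | zero =>
    simp only [ascPochhammer_zero, Polynomial.eval_one, add_zero]
    rw [div_self (Nat.cast_ne_zero.2 (Nat.factorial_ne_zero _))]
  | succ ν ih =>
    rw [ascPochhammer_succ_right, Polynomial.eval_mul, Polynomial.eval_add, Polynomial.eval_X,
      Polynomial.eval_natCast, ih]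
    have hf2 : ((m + (ν + 1)).factorial : ℝ) = ((m + ν).factorial : ℝ) * ((m : ℝ) + ν + 1) := by
      rw [show m + (ν + 1) = (m + ν) + 1 by ring, Nat.factorial_succ]
      push_cast; ring
    rw [hf2]
    have h1 : (m.factorial : ℝ) ≠ 0 := Nat.cast_ne_zero.2 (Nat.factorial_ne_zero _)
    rw [div_mul_eq_mul_div, div_eq_div_iff h1 h1]
    ring

lemma asc_nat (n : ℕ) : ∀ i : ℕ, (ascPochhammer ℝ i).eval ((n : ℝ) + 1)
    = ((n + i).factorial : ℝ) / (n.factorial : ℝ) := by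
  intro i
  induction i with
  | zero =>
    simp only [ascPochhammer_zero, Polynomial.eval_one, add_zero]
    rw [div_self (Nat.cast_ne_zero.2 (Nat.factorial_ne_zero _))]
  | succ i ih =>
    rw [ascPochhammer_succ_right, Polynomial.eval_mul, Polynomial.eval_add, Polynomial.eval_X,
      Polynomial.eval_natCast, ih]
    have hf2 : ((n + (i + 1)).factorial : ℝ) = ((n + i).factorial : ℝ) * ((n : ℝ) + i + 1) := by
      rw [show n + (i + 1) = (n + i) + 1 by ring, Nat.factorial_succ]
      push_cast; ring
    rw [hf2]
    have h1 : (n.factorial : ℝ) ≠ 0 := Nat.cast_ne_zero.2 (Nat.factorial_ne_zero _)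
    rw [div_mul_eq_mul_div, div_eq_div_iff h1 h1]
    ring

/-- Identity (2.1) of Theorem 2.1: a generalization of Knuth's old sum
(Reed Dawson identity) for even upper index.  Here `Real.Gamma` vanishes at its
poles (the nonpositive integers), so division by `Γ(·)^2` there yields `0`,
matching the convention that `1/Γ(x)²` is `0` when `x` is a nonpositive integer. -/
theorem theorem_2_1_even (ν i : ℕ) :
    ∑ k ∈ range (2 * ν + 1),
      (-1 : ℝ) ^ k * ((2 * ν + i).choose (k + i)) * ((2 * k).choose k) / 2 ^ k
      = π * (ascPochhammer ℝ i).eval ((2 * ν + 1 : ℕ) : ℝ)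
          * (2 ^ (2 * i) * (i.factorial : ℝ) / ((2 * i).factorial : ℝ))
          * ∑ r ∈ range (i + 1),
              ((i.choose r : ℝ) * (ascPochhammer ℝ ν).eval (1 / 2 + ((i : ℝ) - r) / 2))
                / (2 ^ r * ((i - r).factorial : ℝ)
                    * (Real.Gamma (1 / 2 + ((r : ℝ) - i) / 2)) ^ 2
                    * (ascPochhammer ℝ ν).eval (1 + ((i : ℝ) - r) / 2)) := by
  have h2i : ((2 * i).choose i : ℝ) ≠ 0 :=
    Nat.cast_ne_zero.2 (Nat.choose_pos (by omega)).ne'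
  have hM := Mlem i (2 * ν)
  have hL : ∑ k ∈ range (2 * ν + 1),
      (-1 : ℝ) ^ k * ((2 * ν + i).choose (k + i)) * ((2 * k).choose k) / 2 ^ k
      = SS (2 * ν) i / (4 : ℝ) ^ ν := by
    unfold SS
    rw [Finset.sum_div]
    apply Finset.sum_congr rfl
    intro k _
    rw [show ((4 : ℝ)) ^ ν = 2 ^ (2 * ν) by
      rw [show (4 : ℝ) = 2 ^ 2 by norm_num, ← pow_mul]]
    have hk : (2 : ℝ) ^ k ≠ 0 := by positivity
    have hn : (2 : ℝ) ^ (2 * ν) ≠ 0 := by positivity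
    field_simp
  have hSS : SS (2 * ν) i = ((2 * ν + i).choose i : ℝ) * TT (2 * ν) i
      / ((2 * i).choose i : ℝ) := by
    rw [eq_div_iff h2i]
    linear_combination hM
  rw [hL, hSS, TT_expand (2 * ν) i, Finset.mul_sum, Finset.sum_div, Finset.sum_div,
    Finset.mul_sum]
  apply Finset.sum_congr rfl
  intro r hr
  simp only [Finset.mem_range] at hr
  rcases Nat.even_or_odd (i - r) with ⟨m, hm⟩ | ⟨m, hm⟩
  · -- even case : i = r + 2m
    have hi : i = r + 2 * m := by omega
    subst hi
    rw [if_pos (by omega), show 2 * ν + (r + 2 * m) - r = 2 * (ν + m) by omega,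
      show 2 * (ν + m) / 2 = ν + m by omega,
      show (r + 2 * m) - r = 2 * m by omega,
      show ((2 * ν + 1 : ℕ) : ℝ) = ((2 * ν : ℕ) : ℝ) + 1 by push_cast; ring,
      asc_nat (2 * ν) (r + 2 * m),
      show (1 : ℝ) / 2 + (((r + 2 * m : ℕ) : ℝ) - r) / 2 = 1 / 2 + (m : ℕ) by push_cast; ring,
      asc_half m ν,
      show (1 : ℝ) + (((r + 2 * m : ℕ) : ℝ) - r) / 2 = 1 + (m : ℕ) by push_cast; ring,
      asc_one m ν,
      show (1 : ℝ) / 2 + ((r : ℝ) - ((r + 2 * m : ℕ) : ℝ)) / 2 = 1 / 2 - (m : ℕ) by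
        push_cast; ring,
      gamma_sq m,
      Nat.cast_choose ℝ (show r + 2 * m ≤ 2 * ν + (r + 2 * m) by omega),
      Nat.cast_choose ℝ (show r + 2 * m ≤ 2 * (r + 2 * m) by omega),
      Nat.cast_choose ℝ (show ν + m ≤ 2 * (ν + m) by omega),
      show 2 * ν + (r + 2 * m) - (r + 2 * m) = 2 * ν by omega,
      show 2 * (r + 2 * m) - (r + 2 * m) = r + 2 * m by omega,
      show 2 * (ν + m) - (ν + m) = ν + m by omega]
    have f1 : ((2 * ν + (r + 2 * m)).factorial : ℝ) ≠ 0 :=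
      Nat.cast_ne_zero.2 (Nat.factorial_ne_zero _)
    have f2 : (((r + 2 * m)).factorial : ℝ) ≠ 0 := Nat.cast_ne_zero.2 (Nat.factorial_ne_zero _)
    have f3 : (((2 * ν)).factorial : ℝ) ≠ 0 := Nat.cast_ne_zero.2 (Nat.factorial_ne_zero _)
    have f4 : (((2 * (r + 2 * m))).factorial : ℝ) ≠ 0 :=
      Nat.cast_ne_zero.2 (Nat.factorial_ne_zero _)
    have f5 : (((2 * (ν + m))).factorial : ℝ) ≠ 0 := Nat.cast_ne_zero.2 (Nat.factorial_ne_zero _)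
    have f6 : (((ν + m)).factorial : ℝ) ≠ 0 := Nat.cast_ne_zero.2 (Nat.factorial_ne_zero _)
    have f7 : (((2 * m)).factorial : ℝ) ≠ 0 := Nat.cast_ne_zero.2 (Nat.factorial_ne_zero _)
    have f8 : ((m).factorial : ℝ) ≠ 0 := Nat.cast_ne_zero.2 (Nat.factorial_ne_zero _)
    have p1 : (2 : ℝ) ^ r ≠ 0 := by positivity
    have p2 : (4 : ℝ) ^ ν ≠ 0 := by positivity
    have p3 : (16 : ℝ) ^ m ≠ 0 := by positivity
    have p4 : (2 : ℝ) ^ (2 * (r + 2 * m)) ≠ 0 := by positivity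
    have hπ : π ≠ 0 := Real.pi_ne_zero
    field_simp
    rw [show (16 : ℝ) ^ m = 2 ^ (4 * m) by
        rw [show (16 : ℝ) = 2 ^ 4 by norm_num, ← pow_mul],
      show m + ν = ν + m by ring]
    ring
  · -- odd case : i = r + 2m + 1, both sides vanish
    have hi : i = r + 2 * m + 1 := by omega
    subst hi
    rw [if_neg (by omega),
      show (1 : ℝ) / 2 + ((r : ℝ) - ((r + 2 * m + 1 : ℕ) : ℝ)) / 2 = -(m : ℕ) by
        push_cast; ring,
      Real.Gamma_neg_nat_eq_zero]
    simp
end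

section
/- For every natural number ν, ∑_{k=0}^{2ν} (−1)^k · C(2ν, k) · 2^{−k} · C(2k, k) = 2^{−2ν} · C(2ν, ν), with the sum taken over rational (or real) numbers. -/
open Finset

private def f (n k : ℕ) : ℚ := (-1 : ℚ) ^ k * (n.choose k) * ((2 * k).choose k) / 2 ^ k

private def g (n k : ℕ) : ℚ :=
  (-1 : ℚ) ^ k * k ^ 2 * ((n + 2).choose k) * ((2 * k).choose k) / 2 ^ k

private lemma h1 (n k : ℕ) : (n + 1) * n.choose k = (n + 1).choose k * (n + 1 - k) := by
  rw [← Nat.choose_succ_right_eq, ← Nat.add_one_mul_choose_eq]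

private lemma q3 (k : ℕ) :
    ((k : ℚ) + 1) ^ 2 * ((2 * (k + 1)).choose (k + 1))
      = (2 * k + 1) * (2 * k + 2) * ((2 * k).choose k) := by
  have h := Nat.succ_mul_centralBinom_succ k
  simp only [Nat.centralBinom] at h
  have h' := congrArg (fun x : ℕ => (x : ℚ)) h
  push_cast at h' ⊢
  nlinarith [h']

private lemma keyQ (n k : ℕ) :
    2 * ((n : ℚ) + 2) ^ 2 * ((n + 2).choose k) * ((2 * k).choose k)
      = 2 * ((n : ℚ) + 1) * ((n : ℚ) + 2) * (n.choose k) * ((2 * k).choose k)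
        + 2 * (k : ℚ) ^ 2 * ((n + 2).choose k) * ((2 * k).choose k)
        + ((k : ℚ) + 1) ^ 2 * ((n + 2).choose (k + 1)) * ((2 * (k + 1)).choose (k + 1)) := by
  rcases le_or_gt k (n + 1) with hk | hk
  · have q1 : ((n : ℚ) + 1) * ((n : ℚ) + 2) * (n.choose k)
        = ((n + 2).choose k) * (((n : ℚ) + 2) - k) * (((n : ℚ) + 1) - k) := by
      have a : (n + 1) * (n + 2) * n.choose k = (n + 2).choose k * ((n + 2 - k) * (n + 1 - k)) := by
        calc (n + 1) * (n + 2) * n.choose k = (n + 2) * ((n + 1) * n.choose k) := by ring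
          _ = (n + 2) * ((n + 1).choose k * (n + 1 - k)) := by rw [h1]
          _ = ((n + 2) * (n + 1).choose k) * (n + 1 - k) := by ring
          _ = ((n + 2).choose k * (n + 2 - k)) * (n + 1 - k) := by rw [h1 (n + 1) k]
          _ = _ := by ring
      have a' := congrArg (fun x : ℕ => (x : ℚ)) a
      simp only [Nat.cast_mul, Nat.cast_sub (by omega : k ≤ n + 2),
        Nat.cast_sub (by omega : k ≤ n + 1)] at a'
      push_cast at a' ⊢
      linarith [a']
    have q2 : ((k : ℚ) + 1) * ((n + 2).choose (k + 1)) = ((n + 2).choose k) * (((n : ℚ) + 2) - k) := by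
      have a := Nat.choose_succ_right_eq (n + 2) k
      have a' := congrArg (fun x : ℕ => (x : ℚ)) a
      simp only [Nat.cast_mul, Nat.cast_sub (by omega : k ≤ n + 2)] at a'
      push_cast at a' ⊢
      linarith [a']
    have q3' := q3 k
    linear_combination (-2 * (((2 * k).choose k : ℚ))) * q1
      + (-2 * (2 * (k : ℚ) + 1) * (((2 * k).choose k : ℚ))) * q2
      + (-(((n + 2).choose (k + 1) : ℚ))) * q3'
  · rcases eq_or_lt_of_le (Nat.succ_le_of_lt hk) with hk2 | hk2
    · have : k = n + 2 := hk2.symm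
      subst this
      simp [Nat.choose_eq_zero_of_lt (by omega : n < n + 2),
        Nat.choose_eq_zero_of_lt (by omega : n + 2 < n + 2 + 1), Nat.choose_self]
    · simp [Nat.choose_eq_zero_of_lt (by omega : n < k),
        Nat.choose_eq_zero_of_lt (by omega : n + 2 < k),
        Nat.choose_eq_zero_of_lt (by omega : n + 2 < k + 1)]

private lemma step (n k : ℕ) :
    ((n : ℚ) + 2) ^ 2 * f (n + 2) k - ((n : ℚ) + 1) * ((n : ℚ) + 2) * f n k
      = g n k - g n (k + 1) := by
  have hkey := keyQ n k
  simp only [f, g]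
  have hne : ((2 : ℚ)) ^ k ≠ 0 := by positivity
  have hne' : ((2 : ℚ)) ^ (k + 1) ≠ 0 := by positivity
  push_cast
  linear_combination ((-1 : ℚ)) ^ k / (2:ℚ) ^ k / 2 * hkey

private lemma rec_even (n : ℕ) :
    ((n : ℚ) + 2) * (∑ k ∈ range (n + 2 + 1), f (n + 2) k)
      = ((n : ℚ) + 1) * (∑ k ∈ range (n + 1), f n k) := by
  have htel : ∑ k ∈ range (n + 3),
      (((n : ℚ) + 2) ^ 2 * f (n + 2) k - ((n : ℚ) + 1) * ((n : ℚ) + 2) * f n k)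
      = g n 0 - g n (n + 3) := by
    simp_rw [step]
    exact Finset.sum_range_sub' (g n) (n + 3)
  have h0 : g n 0 = 0 := by simp [g]
  have h3 : g n (n + 3) = 0 := by
    simp [g, Nat.choose_eq_zero_of_lt (by omega : n + 2 < n + 3)]
  rw [h0, h3, sub_zero, Finset.sum_sub_distrib, ← Finset.mul_sum, ← Finset.mul_sum,
    sub_eq_zero] at htel
  have hextra : ∑ k ∈ range (n + 3), f n k = ∑ k ∈ range (n + 1), f n k := by
    rw [Finset.sum_range_succ, Finset.sum_range_succ (n := n + 1),
      show f n (n + 2) = 0 by simp [f, Nat.choose_eq_zero_of_lt (by omega : n < n + 2)],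
      show f n (n + 1) = 0 by simp [f, Nat.choose_eq_zero_of_lt (by omega : n < n + 1)]]
    ring
  rw [hextra] at htel
  have hne : ((n : ℚ) + 2) ≠ 0 := by positivity
  apply mul_left_cancel₀ hne
  linear_combination htel

private lemma S_even : ∀ ν : ℕ, (∑ k ∈ range (2 * ν + 1), f (2 * ν) k)
    = ((2 * ν).choose ν) / 2 ^ (2 * ν) := by
  intro ν
  induction ν with
  | zero => simp [f]
  | succ m ih =>
      have hrec := rec_even (2 * m)
      have h2 : 2 * (m + 1) = 2 * m + 2 := by ring
      rw [h2]
      have hcb := Nat.succ_mul_centralBinom_succ m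
      simp only [Nat.centralBinom] at hcb
      have h2' : (2 * (m + 1) : ℕ) = 2 * m + 2 := by ring
      rw [h2'] at hcb
      have hcb' := congrArg (fun x : ℕ => (x : ℚ)) hcb
      push_cast at hcb'
      have hne : ((2 * m : ℕ) : ℚ) + 2 ≠ 0 := by positivity
      apply mul_left_cancel₀ hne
      rw [hrec, ih]
      push_cast
      field_simp
      linear_combination (-2 : ℚ) * (2:ℚ) ^ (2 * m) * hcb'

/-- Knuth's old sum (Reed Dawson identity), even case: identity (1.1). -/
theorem knuth_old_sum_even (ν : ℕ) :
    ∑ k ∈ Finset.range (2 * ν + 1),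
      (-1 : ℚ) ^ k * ((2 * ν).choose k) * ((2 * k).choose k) / 2 ^ k
      = ((2 * ν).choose ν) / 2 ^ (2 * ν) := by
  have := S_even ν
  simpa [f] using this
end

section
/- For every natural number ν, ∑_{k=0}^{2ν+1} (−1)^k · C(2ν+1, k) · 2^{−k} · C(2k, k) = 0, with the sum taken over rational (or real) numbers. -/
open Finset Polynomial

/-- coefficient of `(2X+1)^n` -/
lemma coeff_two_X_add_one_pow (n k : ℕ) :
    (((2 * X + 1 : ℚ[X])) ^ n).coeff k = (n.choose k : ℚ) * 2 ^ k := by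
  have hterm : ∀ i : ℕ, ((2 * X : ℚ[X]) ^ i * 1 ^ (n - i) * ((n.choose i : ℕ) : ℚ[X]))
      = Polynomial.C ((n.choose i : ℚ) * 2 ^ i) * X ^ i := by
    intro i
    rw [mul_pow, one_pow, mul_one,
      show ((2:ℚ[X])) = Polynomial.C 2 from (map_ofNat Polynomial.C 2).symm,
      show (((n.choose i : ℕ) : ℚ[X])) = Polynomial.C ((n.choose i : ℕ) : ℚ) from
        (Polynomial.C_eq_natCast _).symm, ← map_pow, mul_right_comm, ← map_mul,
      mul_comm ((2:ℚ) ^ i)]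
  rw [add_pow, finset_sum_coeff]
  simp only [hterm, Polynomial.coeff_C_mul, Polynomial.coeff_X_pow, mul_ite, mul_one, mul_zero]
  rw [Finset.sum_ite_eq]
  by_cases hk : k ≤ n
  · simp [Nat.lt_succ_of_le hk]
  · push_neg at hk
    have h1 : k ∉ Finset.range (n + 1) := by
      simp only [Finset.mem_range]
      omega
    rw [if_neg h1, Nat.choose_eq_zero_of_lt hk]
    simp

/-- Trinomial-type identity. -/
lemma central_binom_expand (k : ℕ) :
    ((2 * k).choose k : ℚ) * 2 ^ k
      = ∑ m ∈ Finset.range (k + 1), (k.choose m : ℚ) * 4 ^ m * (m.choose (k - m)) := by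
  have h1 : (((2 * X + 1 : ℚ[X])) ^ (2 * k)).coeff k = ((2 * k).choose k : ℚ) * 2 ^ k :=
    coeff_two_X_add_one_pow _ _
  have h2 : ((2 * X + 1 : ℚ[X])) ^ (2 * k) = (4 * (X * (X + 1)) + 1) ^ k := by
    rw [pow_mul]
    ring_nf
  rw [h2, add_pow, finset_sum_coeff] at h1
  rw [← h1]
  apply Finset.sum_congr rfl
  intro m hm
  have hmk : m ≤ k := Nat.lt_succ_iff.1 (Finset.mem_range.1 hm)
  have : (4 * (X * (X + 1)) : ℚ[X]) ^ m * 1 ^ (k - m) * ((k.choose m : ℕ) : ℚ[X])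
      = Polynomial.C ((4:ℚ) ^ m * (k.choose m : ℚ)) * (X ^ m * (X + 1) ^ m) := by
    rw [show ((4:ℚ[X])) = Polynomial.C 4 from (map_ofNat Polynomial.C 4).symm,
      show (((k.choose m : ℕ) : ℚ[X])) = Polynomial.C ((k.choose m : ℕ) : ℚ) from
        (Polynomial.C_eq_natCast _).symm]
    rw [mul_pow, one_pow, mul_one, ← map_pow, mul_right_comm, ← map_mul, mul_pow]
  rw [this, coeff_C_mul]
  have hco : ((X : ℚ[X]) ^ m * (X + 1) ^ m).coeff k = ((X + 1 : ℚ[X]) ^ m).coeff (k - m) := by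
    conv_lhs => rw [show k = (k - m) + m by omega]
    exact coeff_X_pow_mul _ _ _
  rw [hco, coeff_X_add_one_pow]
  ring

/-- Rewrite `C(2k,k)/2^k` as a sum. -/
lemma central_binom_div (k : ℕ) :
    ((2 * k).choose k : ℚ) / 2 ^ k
      = ∑ j ∈ Finset.range (k + 1), (k.choose (2 * j) : ℚ) * ((2 * j).choose j) / 4 ^ j := by
  have h2 : ((2 : ℚ) ^ k) ≠ 0 := by positivity
  have key := central_binom_expand k
  have hrefl : ∑ m ∈ Finset.range (k + 1), (k.choose m : ℚ) * 4 ^ m * (m.choose (k - m))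
      = ∑ j ∈ Finset.range (k + 1),
          ((k.choose (2 * j) : ℚ) * ((2 * j).choose j) / 4 ^ j) * (2 ^ k * 2 ^ k) := by
    rw [← Finset.sum_range_reflect]
    apply Finset.sum_congr rfl
    intro j hj
    have hjk : j ≤ k := Nat.lt_succ_iff.1 (Finset.mem_range.1 hj)
    have h1 : k + 1 - 1 - j = k - j := by omega
    rw [h1]
    have h1' : k - (k - j) = j := by omega
    rw [h1']
    have hcc : k.choose (2 * j) * ((2 * j).choose j) = k.choose (k - j) * ((k - j).choose j) := by
      by_cases h2j : 2 * j ≤ k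
      · have e1 := Nat.choose_mul (n := k) (show j ≤ 2 * j by omega)
        rw [show 2 * j - j = j by omega] at e1
        rw [e1, Nat.choose_symm hjk]
      · push_neg at h2j
        rw [Nat.choose_eq_zero_of_lt h2j,
          Nat.choose_eq_zero_of_lt (show k - j < j by omega)]
        ring
    have h4 : ((4 : ℚ) ^ j) ≠ 0 := by positivity
    have hpow : (2:ℚ) ^ k * 2 ^ k = 4 ^ j * 4 ^ (k - j) := by
      rw [show (4:ℚ) = 2 ^ 2 by norm_num, ← pow_mul, ← pow_mul, ← pow_add, ← pow_add]
      congr 1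
      omega
    rw [hpow, ← mul_assoc, div_mul_cancel₀ _ h4]
    have hc := congrArg (Nat.cast : ℕ → ℚ) hcc
    push_cast at hc
    linear_combination (-((4:ℚ) ^ (k - j))) * hc
  rw [hrefl, ← Finset.sum_mul] at key
  rw [div_eq_iff h2]
  apply mul_right_cancel₀ h2
  rw [key]
  ring

/-- Orthogonality: alternating sum of `C(n,k) C(k,m)` vanishes for `m ≠ n`. -/
lemma alt_sum_choose_choose (n m : ℕ) (hmn : m ≠ n) :
    ∑ k ∈ Finset.range (n + 1), (-1 : ℚ) ^ k * (n.choose k) * (k.choose m) = 0 := by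
  by_cases hm : n < m
  · apply Finset.sum_eq_zero
    intro k hk
    have : k < m := by have := Finset.mem_range.1 hk; omega
    rw [Nat.choose_eq_zero_of_lt this]
    ring
  · push_neg at hm
    have hmlt : m < n := lt_of_le_of_ne hm hmn
    have hsplit : Finset.range (n + 1) = Finset.Ico 0 (n+1) := by simp
    rw [hsplit, ← Finset.sum_Ico_consecutive _ (Nat.zero_le m) (by omega : m ≤ n + 1)]
    have hfirst : ∑ k ∈ Finset.Ico 0 m, (-1 : ℚ) ^ k * (n.choose k) * (k.choose m) = 0 := by
      apply Finset.sum_eq_zero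
      intro k hk
      have : k < m := (Finset.mem_Ico.1 hk).2
      rw [Nat.choose_eq_zero_of_lt this]
      ring
    rw [hfirst, zero_add, Finset.sum_Ico_eq_sum_range]
    have hrw : ∀ i ∈ Finset.range (n + 1 - m),
        (-1 : ℚ) ^ (m + i) * (n.choose (m + i)) * ((m + i).choose m)
          = ((-1 : ℚ) ^ m * (n.choose m)) * ((-1 : ℚ) ^ i * ((n - m).choose i)) := by
      intro i hi
      have hi' : i ≤ n - m := by have := Finset.mem_range.1 hi; omega
      have h := Nat.choose_mul (n := n) (show m ≤ m + i by omega)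
      rw [show m + i - m = i by omega] at h
      have hc : (n.choose (m+i) : ℚ) * ((m+i).choose m) = (n.choose m : ℚ) * ((n-m).choose i) := by
        exact_mod_cast congrArg (Nat.cast : ℕ → ℚ) h
      rw [pow_add]
      linear_combination ((-1:ℚ) ^ m * (-1) ^ i) * hc
    rw [Finset.sum_congr rfl hrw, ← Finset.mul_sum]
    have h0 : (n - m : ℕ) ≠ 0 := by omega
    have hz := Int.alternating_sum_range_choose_of_ne h0
    have hcast : ∑ i ∈ Finset.range (n - m + 1), (-1 : ℚ) ^ i * ((n - m).choose i) = 0 := by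
      exact_mod_cast congrArg (Int.cast : ℤ → ℚ) hz
    rw [show n + 1 - m = n - m + 1 by omega, hcast, mul_zero]

/-- Knuth's old sum (Reed Dawson identity), odd case: identity (1.2). -/
theorem knuth_old_sum_odd (ν : ℕ) :
    ∑ k ∈ Finset.range (2 * ν + 2),
      (-1 : ℚ) ^ k * ((2 * ν + 1).choose k) * ((2 * k).choose k) / 2 ^ k
      = 0 := by
  set n := 2 * ν + 1 with hn
  have hstep : ∀ k ∈ Finset.range (n + 1),
      (-1 : ℚ) ^ k * ((n).choose k) * ((2 * k).choose k) / 2 ^ k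
      = ∑ j ∈ Finset.range (n + 1),
          ((-1 : ℚ) ^ k * (n.choose k) * (k.choose (2*j))) * (((2*j).choose j : ℚ) / 4 ^ j) := by
    intro k hk
    have hkn : k ≤ n := Nat.lt_succ_iff.1 (Finset.mem_range.1 hk)
    rw [mul_div_assoc, central_binom_div k, Finset.mul_sum]
    have hsub : Finset.range (k + 1) ⊆ Finset.range (n + 1) :=
      Finset.range_subset_range.2 (by omega)
    have hz : ∀ j ∈ Finset.range (n + 1), j ∉ Finset.range (k + 1) →
        ((-1 : ℚ) ^ k * (n.choose k) * (k.choose (2*j))) * (((2*j).choose j : ℚ) / 4 ^ j)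
          = 0 := by
      intro j _ hj
      have : k < 2 * j := by
        have hj' : ¬ j < k + 1 := fun h => hj (Finset.mem_range.2 h)
        omega
      rw [Nat.choose_eq_zero_of_lt this]
      push_cast
      ring
    rw [← Finset.sum_subset hsub hz]
    apply Finset.sum_congr rfl
    intro j _
    rw [mul_div_assoc]
    ring
  rw [show 2 * ν + 2 = n + 1 by omega]
  rw [Finset.sum_congr rfl hstep, Finset.sum_comm]
  apply Finset.sum_eq_zero
  intro j hj
  rw [← Finset.sum_mul]
  have h2j : 2 * j ≠ n := by omega
  rw [alt_sum_choose_choose n (2*j) h2j, zero_mul]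
end

section
/- For every natural number ν, ∑_{k=0}^{2ν} (−1)^k · C(2ν+1, k+1) · 2^{−k} · C(2k, k) = 2^{−2ν} · (2ν+1) · C(2ν, ν), with the sum taken over rational (or real) numbers. -/
open Finset

private def aa (n k : ℕ) : ℚ := (-1) ^ k * (n.choose k) * ((2 * k).choose k) / 2 ^ k

private def HH (n k : ℕ) : ℚ :=
  -((-1) ^ k * (k : ℚ) ^ 2 * ((n + 1).choose k) * ((2 * k).choose k) / 2 ^ k)

private def gg (n : ℕ) : ℚ := ∑ k ∈ range (n + 1), aa n k

private lemma hB (k : ℕ) :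
    (((2 * (k + 1)).choose (k + 1) : ℚ)) * (k + 1) = 2 * (2 * k + 1) * ((2 * k).choose k) := by
  have h := Nat.succ_mul_centralBinom_succ k
  rw [Nat.centralBinom, Nat.centralBinom] at h
  have hq : ((k + 1 : ℕ) : ℚ) * ((2 * (k + 1)).choose (k + 1)) =
      ((2 : ℕ) : ℚ) * ((2 * k + 1 : ℕ)) * ((2 * k).choose k) := by
    exact_mod_cast congrArg (Nat.cast (R := ℚ)) h
  push_cast at hq
  linarith [hq]

private lemma h3 (m k : ℕ) :
    (((m + 2).choose (k + 1) : ℚ)) * (k + 1) = ((m + 2).choose k) * ((m : ℚ) + 2 - k) := by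
  rcases le_or_gt k (m + 2) with h | h
  · have e := Nat.choose_succ_right_eq (m + 2) k
    have hc : ((m + 2 - k : ℕ) : ℚ) = (m : ℚ) + 2 - k := by
      rw [Nat.cast_sub h]; push_cast; ring
    calc (((m + 2).choose (k + 1) : ℚ)) * (k + 1)
        = (((m + 2).choose (k + 1) * (k + 1) : ℕ) : ℚ) := by push_cast; ring
      _ = (((m + 2).choose k * (m + 2 - k) : ℕ) : ℚ) := by rw [e]
      _ = ((m + 2).choose k) * ((m : ℚ) + 2 - k) := by rw [Nat.cast_mul, hc]
  · rw [Nat.choose_eq_zero_of_lt (by omega), Nat.choose_eq_zero_of_lt (by omega)]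
    simp

private lemma h4 (m k : ℕ) :
    ((m : ℚ) + 2 - k) * ((m : ℚ) + 1 - k) * ((m + 2).choose k)
      = ((m : ℚ) + 2) * ((m : ℚ) + 1) * (m.choose k) := by
  rcases le_or_gt k m with h | h
  · have p1 : (((m + 2).choose k : ℚ)) * ((m : ℚ) + 2 - k) = ((m : ℚ) + 2) * ((m + 1).choose k) := by
      have f1q : ((m : ℚ) + 2) * ((m + 1).choose k) = ((m + 2).choose (k + 1)) * (k + 1) := by
        exact_mod_cast congrArg (Nat.cast (R := ℚ)) (Nat.add_one_mul_choose_eq (m + 1) k)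
      rw [f1q, h3 m k]
    have p2 : (((m + 1).choose k : ℚ)) * ((m : ℚ) + 1 - k) = ((m : ℚ) + 1) * (m.choose k) := by
      have e : (m + 1).choose (k + 1) * (k + 1) = (m + 1).choose k * (m + 1 - k) :=
        Nat.choose_succ_right_eq (m + 1) k
      have f2q : ((m : ℚ) + 1) * (m.choose k) = ((m + 1).choose (k + 1)) * (k + 1) := by
        exact_mod_cast congrArg (Nat.cast (R := ℚ)) (Nat.add_one_mul_choose_eq m k)
      have hc : ((m + 1 - k : ℕ) : ℚ) = (m : ℚ) + 1 - k := by
        rw [Nat.cast_sub (by omega)]; push_cast; ring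
      rw [f2q]
      symm
      calc (((m + 1).choose (k + 1) : ℚ)) * (k + 1)
          = (((m + 1).choose (k + 1) * (k + 1) : ℕ) : ℚ) := by push_cast; ring
        _ = (((m + 1).choose k * (m + 1 - k) : ℕ) : ℚ) := by rw [e]
        _ = ((m + 1).choose k) * ((m : ℚ) + 1 - k) := by rw [Nat.cast_mul, hc]
    calc ((m : ℚ) + 2 - k) * ((m : ℚ) + 1 - k) * ((m + 2).choose k)
        = (((m + 2).choose k : ℚ) * ((m : ℚ) + 2 - k)) * ((m : ℚ) + 1 - k) := by ring
      _ = ((m : ℚ) + 2) * (((m + 1).choose k : ℚ) * ((m : ℚ) + 1 - k)) := by rw [p1]; ring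
      _ = ((m : ℚ) + 2) * (((m : ℚ) + 1) * (m.choose k)) := by rw [p2]
      _ = ((m : ℚ) + 2) * ((m : ℚ) + 1) * (m.choose k) := by ring
  · rw [Nat.choose_eq_zero_of_lt h, Nat.cast_zero, mul_zero]
    rcases Nat.lt_or_ge (m + 2) k with h2 | h2
    · rw [Nat.choose_eq_zero_of_lt h2]; simp
    · have : k = m + 1 ∨ k = m + 2 := by omega
      rcases this with rfl | rfl <;> push_cast <;> ring

private lemma cert (m k : ℕ) :
    ((m : ℚ) + 2) ^ 2 * aa (m + 2) k - ((m : ℚ) + 1) * ((m : ℚ) + 2) * aa m k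
      = HH (m + 1) (k + 1) - HH (m + 1) k := by
  have e1 := hB k
  have e2 := h3 m k
  have e3 := h4 m k
  simp only [aa, HH, pow_succ]
  rw [show m + 1 + 1 = m + 2 from rfl]
  push_cast
  linear_combination
    (-(-1 : ℚ) ^ k * ((k : ℚ) + 1) * (((2 * (k + 1)).choose (k + 1) : ℚ)) / (2 * 2 ^ k)) * e2 +
    (-(-1 : ℚ) ^ k * (((m + 2).choose k : ℚ)) * ((m : ℚ) + 2 - k) / (2 * 2 ^ k)) * e1 +
    ((-1 : ℚ) ^ k * (((2 * k).choose k : ℚ)) / 2 ^ k) * e3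

private lemma gg_rec (m : ℕ) : ((m : ℚ) + 2) * gg (m + 2) = ((m : ℚ) + 1) * gg m := by
  have tele : ∑ k ∈ range (m + 3), (HH (m + 1) (k + 1) - HH (m + 1) k)
      = HH (m + 1) (m + 3) - HH (m + 1) 0 := Finset.sum_range_sub (HH (m + 1)) (m + 3)
  have hz1 : HH (m + 1) (m + 3) = 0 := by
    simp [HH, Nat.choose_eq_zero_of_lt (by omega : m + 1 + 1 < m + 3)]
  have hz0 : HH (m + 1) 0 = 0 := by simp [HH]
  have hsum : ∑ k ∈ range (m + 3),
      (((m : ℚ) + 2) ^ 2 * aa (m + 2) k - ((m : ℚ) + 1) * ((m : ℚ) + 2) * aa m k) = 0 := by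
    rw [Finset.sum_congr rfl fun k _ => cert m k, tele, hz1, hz0, sub_zero]
  rw [Finset.sum_sub_distrib, ← Finset.mul_sum, ← Finset.mul_sum, sub_eq_zero] at hsum
  have hgm : ∑ k ∈ range (m + 3), aa m k = gg m := by
    rw [gg]
    symm
    apply Finset.sum_subset (Finset.range_subset_range.2 (by omega))
    intro k _ hk
    simp only [Finset.mem_range, not_lt] at hk
    simp [aa, Nat.choose_eq_zero_of_lt (by omega : m < k)]
  have hg2 : ∑ k ∈ range (m + 3), aa (m + 2) k = gg (m + 2) := rfl
  rw [hgm, hg2] at hsum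
  have hne : ((m : ℚ) + 2) ≠ 0 := by positivity
  apply mul_left_cancel₀ hne
  linear_combination hsum

private lemma gg_even (ν : ℕ) : gg (2 * ν) = ((2 * ν).choose ν : ℚ) / 4 ^ ν := by
  induction ν with
  | zero => norm_num [gg, aa]
  | succ n ih =>
    have hc : ((2 * (n + 1)).choose (n + 1) : ℚ) * ((n : ℚ) + 1)
        = 2 * (2 * (n : ℚ) + 1) * ((2 * n).choose n) := by
      have := hB n; push_cast at this ⊢; linarith [this]
    have h1 := gg_rec (2 * n)
    rw [ih] at h1
    have h2 : ((2 * (n : ℚ)) + 2) * (((2 * (n + 1)).choose (n + 1) : ℚ) / 4 ^ (n + 1))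
        = ((2 * (n : ℚ)) + 1) * (((2 * n).choose n : ℚ) / 4 ^ n) := by
      rw [pow_succ]
      linear_combination (1 / (2 * (4 : ℚ) ^ n)) * hc
    have hne : ((2 * (n : ℚ)) + 2) ≠ 0 := by positivity
    have h1' : ((2 * (n : ℚ)) + 2) * gg (2 * n + 2)
        = ((2 * (n : ℚ)) + 1) * (((2 * n).choose n : ℚ) / 4 ^ n) := by
      have := gg_rec (2 * n)
      rw [ih] at this
      push_cast at this
      linear_combination this
    have := mul_left_cancel₀ hne (h1'.trans h2.symm)
    rw [show 2 * (n + 1) = 2 * n + 2 from by ring]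
    exact this

private lemma gg_odd (ν : ℕ) : gg (2 * ν + 1) = 0 := by
  induction ν with
  | zero => norm_num [gg, Finset.sum_range_succ, aa]
  | succ n ih =>
    have h1 := gg_rec (2 * n + 1)
    rw [show (2 * n + 1) + 2 = 2 * (n + 1) + 1 from by ring] at h1
    push_cast at h1
    have hne : ((2 * (n : ℚ) + 1) + 2) ≠ 0 := by positivity
    have : ((2 * (n : ℚ) + 1) + 2) * gg (2 * (n + 1) + 1) = 0 := by
      rw [ih, mul_zero] at h1
      linear_combination h1
    exact (mul_eq_zero.mp this).resolve_left hne

private def ff (n : ℕ) : ℚ :=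
  ∑ k ∈ range n, (-1) ^ k * (n.choose (k + 1)) * ((2 * k).choose k) / 2 ^ k

private lemma ff_succ (n : ℕ) : ff (n + 1) = ff n + gg n := by
  have step : ff (n + 1) = ∑ k ∈ range (n + 1),
      ((-1 : ℚ) ^ k * (n.choose k : ℚ) * ((2 * k).choose k) / 2 ^ k
        + (-1 : ℚ) ^ k * (n.choose (k + 1) : ℚ) * ((2 * k).choose k) / 2 ^ k) := by
    rw [ff]
    apply Finset.sum_congr rfl
    intro k _
    rw [Nat.choose_succ_succ n k]
    push_cast
    ring
  rw [step, Finset.sum_add_distrib]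
  have h1 : ∑ k ∈ range (n + 1), (-1 : ℚ) ^ k * (n.choose k : ℚ) * ((2 * k).choose k) / 2 ^ k
      = gg n := rfl
  have h2 : ∑ k ∈ range (n + 1), (-1 : ℚ) ^ k * (n.choose (k + 1) : ℚ) * ((2 * k).choose k) / 2 ^ k
      = ff n := by
    rw [Finset.sum_range_succ, ff, Nat.choose_eq_zero_of_lt (by omega : n < n + 1)]
    simp
  rw [h1, h2]
  ring

private lemma ff_main (ν : ℕ) :
    ff (2 * ν + 1) = (2 * (ν : ℚ) + 1) * ((2 * ν).choose ν) / 4 ^ ν := by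
  induction ν with
  | zero => norm_num [ff, Finset.sum_range_succ]
  | succ n ih =>
    have hstep : ff (2 * (n + 1) + 1) = ff (2 * n + 1) + gg (2 * n + 1) + gg (2 * n + 2) := by
      rw [show 2 * (n + 1) + 1 = (2 * n + 2) + 1 from by ring, ff_succ,
        show 2 * n + 2 = (2 * n + 1) + 1 from rfl, ff_succ]
    rw [hstep, ih, gg_odd n, show (2 * n + 1) + 1 = 2 * (n + 1) from by ring, gg_even (n + 1)]
    have hc : ((2 * (n + 1)).choose (n + 1) : ℚ) * ((n : ℚ) + 1)
        = 2 * (2 * (n : ℚ) + 1) * ((2 * n).choose n) := by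
      have := hB n; push_cast at this ⊢; linarith [this]
    push_cast
    rw [pow_succ]
    linear_combination (-1 / (2 * (4 : ℚ) ^ n)) * hc

/-- Riordan's identity (1.6). -/
theorem riordan_identity_even (ν : ℕ) :
    ∑ k ∈ Finset.range (2 * ν + 1),
      (-1 : ℚ) ^ k * ((2 * ν + 1).choose (k + 1)) * ((2 * k).choose k) / 2 ^ k
      = (2 * ν + 1) * ((2 * ν).choose ν) / 2 ^ (2 * ν) := by
  have h := ff_main ν
  rw [ff] at h
  rw [h, show ((2 : ℚ)) ^ (2 * ν) = 4 ^ ν from by rw [pow_mul]; norm_num]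
end

section
/- For every natural number ν, ∑_{k=0}^{2ν} (−1)^k · C(2ν, k) · 2^{−k} · C(2k, k) = (1/2)_ν / (1)_ν, with the sum taken over rational (or real) numbers. -/
open Finset

private def Fq (n k : ℕ) : ℚ := (-1 : ℚ) ^ k * (n.choose k) * ((2 * k).choose k) / 2 ^ k

private def Gq (n k : ℕ) : ℚ :=
  -((-1 : ℚ) ^ k * k ^ 2 * ((n + 2).choose k) * ((2 * k).choose k)) / (2 ^ k * (n + 2))

private lemma Fq_zero {n k : ℕ} (h : n < k) : Fq n k = 0 := by
  simp [Fq, Nat.choose_eq_zero_of_lt h]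

private lemma key (n k : ℕ) :
    (n + 2 : ℚ) * Fq (n + 2) k - (n + 1) * Fq n k = Gq n (k + 1) - Gq n k := by
  have hn2 : ((n : ℚ) + 2) ≠ 0 := by positivity
  have ht : ((2 : ℚ) ^ k) ≠ 0 := by positivity
  by_cases hk : k ≤ n + 2
  · -- central binomial recurrence
    have hc : (((2 * (k + 1)).choose (k + 1) : ℕ) : ℚ) * (k + 1)
        = 2 * (2 * k + 1) * ((2 * k).choose k) := by
      have h := Nat.succ_mul_centralBinom_succ k
      have h' : (k + 1) * ((2 * (k + 1)).choose (k + 1)) = 2 * (2 * k + 1) * ((2 * k).choose k) := h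
      exact_mod_cast by push_cast [← h']; ring
    -- choose recurrence in n-direction
    have ha : (((n + 2).choose (k + 1) : ℕ) : ℚ) * (k + 1)
        = ((n + 2).choose k) * ((n : ℚ) + 2 - k) := by
      have h := Nat.choose_succ_right_eq (n + 2) k
      have hcast : (((n + 2 - k : ℕ)) : ℚ) = (n : ℚ) + 2 - k := by
        push_cast [Nat.cast_sub hk]; ring
      calc (((n + 2).choose (k + 1) : ℕ) : ℚ) * (k + 1)
          = (((n + 2).choose (k + 1) * (k + 1) : ℕ) : ℚ) := by push_cast; ring
        _ = (((n + 2).choose k * (n + 2 - k) : ℕ) : ℚ) := by rw [h]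
        _ = ((n + 2).choose k) * ((n : ℚ) + 2 - k) := by push_cast [Nat.cast_sub hk]; ring
    -- two-step choose relation
    have h3 : (((n + 2).choose k : ℕ) : ℚ) * ((n : ℚ) + 2 - k) * ((n : ℚ) + 1 - k)
        = ((n : ℚ) + 2) * ((n : ℚ) + 1) * (n.choose k) := by
      rcases Nat.lt_or_ge k (n + 2) with hk1 | hk1
      · have hk1' : k ≤ n + 1 := Nat.lt_succ_iff.mp hk1
        have e1 := Nat.choose_mul_succ_eq (n + 1) k
        have e2 := Nat.choose_mul_succ_eq n k
        have c1 : (((n + 2).choose k : ℕ) : ℚ) * ((n : ℚ) + 2 - k)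
            = ((n + 1).choose k) * ((n : ℚ) + 2) := by
          have : (((n + 2).choose k * (n + 2 - k) : ℕ) : ℚ)
              = (((n + 1).choose k * (n + 2) : ℕ) : ℚ) := by rw [← e1]
          calc (((n + 2).choose k : ℕ) : ℚ) * ((n : ℚ) + 2 - k)
              = (((n + 2).choose k * (n + 2 - k) : ℕ) : ℚ) := by
                push_cast [Nat.cast_sub hk]; ring
            _ = (((n + 1).choose k * (n + 2) : ℕ) : ℚ) := this
            _ = ((n + 1).choose k) * ((n : ℚ) + 2) := by push_cast; ring
        have c2 : (((n + 1).choose k : ℕ) : ℚ) * ((n : ℚ) + 1 - k)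
            = (n.choose k) * ((n : ℚ) + 1) := by
          have : (((n + 1).choose k * (n + 1 - k) : ℕ) : ℚ)
              = ((n.choose k * (n + 1) : ℕ) : ℚ) := by rw [← e2]
          calc (((n + 1).choose k : ℕ) : ℚ) * ((n : ℚ) + 1 - k)
              = (((n + 1).choose k * (n + 1 - k) : ℕ) : ℚ) := by
                push_cast [Nat.cast_sub hk1']; ring
            _ = ((n.choose k * (n + 1) : ℕ) : ℚ) := this
            _ = (n.choose k) * ((n : ℚ) + 1) := by push_cast; ring
        calc (((n + 2).choose k : ℕ) : ℚ) * ((n : ℚ) + 2 - k) * ((n : ℚ) + 1 - k)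
            = ((n + 1).choose k) * ((n : ℚ) + 2) * ((n : ℚ) + 1 - k) := by rw [c1]
          _ = (((n + 1).choose k : ℕ) : ℚ) * ((n : ℚ) + 1 - k) * ((n : ℚ) + 2) := by ring
          _ = (n.choose k) * ((n : ℚ) + 1) * ((n : ℚ) + 2) := by rw [c2]
          _ = ((n : ℚ) + 2) * ((n : ℚ) + 1) * (n.choose k) := by ring
      · have hk2 : k = n + 2 := le_antisymm hk hk1
        subst hk2
        have : n.choose (n + 2) = 0 := Nat.choose_eq_zero_of_lt (by omega)
        rw [this]
        push_cast
        ring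
    -- combined certificate relation
    have hac : ((k : ℚ) + 1) ^ 2 * ((n + 2).choose (k + 1)) * ((2 * (k + 1)).choose (k + 1))
        = 2 * (2 * k + 1) * ((n : ℚ) + 2 - k) * ((n + 2).choose k) * ((2 * k).choose k) := by
      calc ((k : ℚ) + 1) ^ 2 * ((n + 2).choose (k + 1)) * ((2 * (k + 1)).choose (k + 1))
          = ((((n + 2).choose (k + 1) : ℕ) : ℚ) * (k + 1))
            * ((((2 * (k + 1)).choose (k + 1) : ℕ) : ℚ) * (k + 1)) := by ring
        _ = (((n + 2).choose k) * ((n : ℚ) + 2 - k))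
            * (2 * (2 * k + 1) * ((2 * k).choose k)) := by rw [ha, hc]
        _ = _ := by ring
    -- now clear denominators and finish
    simp only [Fq, Gq]
    field_simp
    push_cast
    linear_combination ((-1 : ℚ) ^ k * 2 ^ k) *
      (2 * (((2 * k).choose k : ℕ) : ℚ) * h3 - hac)
  · have h1 : n + 2 < k := by omega
    have h2 : n < k := by omega
    have h3 : n + 2 < k + 1 := by omega
    simp [Fq, Gq, Nat.choose_eq_zero_of_lt h1, Nat.choose_eq_zero_of_lt h2,
      Nat.choose_eq_zero_of_lt h3]

private def Sq (n : ℕ) : ℚ := ∑ k ∈ range (n + 1), Fq n k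

private lemma rec2 (n : ℕ) : ((n : ℚ) + 2) * Sq (n + 2) = ((n : ℚ) + 1) * Sq n := by
  have htel : ∑ k ∈ range (n + 3), ((n + 2 : ℚ) * Fq (n + 2) k - (n + 1) * Fq n k)
      = Gq n (n + 3) - Gq n 0 := by
    simp only [key]
    exact Finset.sum_range_sub (Gq n) (n + 3)
  have hG0 : Gq n 0 = 0 := by simp [Gq]
  have hGtop : Gq n (n + 3) = 0 := by
    simp [Gq, Nat.choose_eq_zero_of_lt (by omega : n + 2 < n + 3)]
  have hsplit : ∑ k ∈ range (n + 3), ((n + 2 : ℚ) * Fq (n + 2) k - (n + 1) * Fq n k)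
      = ((n : ℚ) + 2) * Sq (n + 2) - ((n : ℚ) + 1) * (∑ k ∈ range (n + 3), Fq n k) := by
    rw [Finset.sum_sub_distrib, ← Finset.mul_sum, ← Finset.mul_sum]
    norm_num [Sq]
  have hext : ∑ k ∈ range (n + 3), Fq n k = Sq n := by
    rw [show n + 3 = (n + 2) + 1 from rfl, Finset.sum_range_succ,
      show n + 2 = (n + 1) + 1 from rfl, Finset.sum_range_succ,
      Fq_zero (by omega), Fq_zero (by omega)]
    simp [Sq]
  rw [hsplit, hext, hG0, hGtop] at htel
  linarith

/-- Identity (3.1): the `i = 0` case of Theorem 2.1, equivalent to Knuth's old sum. -/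
theorem knuth_old_sum_even_pochhammer (ν : ℕ) :
    ∑ k ∈ Finset.range (2 * ν + 1),
      (-1 : ℚ) ^ k * ((2 * ν).choose k) * ((2 * k).choose k) / 2 ^ k
      = (ascPochhammer ℚ ν).eval (1 / 2) / (ascPochhammer ℚ ν).eval 1 := by
  have hS : ∀ m : ℕ, ∑ k ∈ Finset.range (m + 1),
      (-1 : ℚ) ^ k * (m.choose k) * ((2 * k).choose k) / 2 ^ k = Sq m := by
    intro m; rfl
  rw [hS (2 * ν)]
  induction ν with
  | zero => simp [Sq, Fq]
  | succ ν ih =>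
    have hrec := rec2 (2 * ν)
    have h2ν : 2 * (ν + 1) = 2 * ν + 2 := by ring
    rw [h2ν]
    have hpos1 : (0 : ℚ) < (ascPochhammer ℚ ν).eval 1 :=
      ascPochhammer_pos ν 1 (by norm_num)
    have hpos2 : (0 : ℚ) < (ascPochhammer ℚ ν).eval (1 / 2) :=
      ascPochhammer_pos ν (1 / 2) (by norm_num)
    rw [ascPochhammer_succ_eval, ascPochhammer_succ_eval]
    have hne : ((2 * ν : ℚ) + 2) ≠ 0 := by positivity
    have hSq : Sq (2 * ν + 2) = ((2 * ν : ℚ) + 1) * Sq (2 * ν) / ((2 * ν : ℚ) + 2) := by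
      field_simp
      push_cast at hrec ⊢
      linarith
    rw [hSq, ih]
    have hν1 : ((1 : ℚ) + ν) ≠ 0 := by positivity
    field_simp
    ring
end

section
/- For every natural number ν, ∑_{k=0}^{2ν} (−1)^k · C(2ν+1, k+1) · 2^{−k} · C(2k, k) = (2ν+1) · (1/2)_ν / (1)_ν, with the sum taken over rational (or real) numbers. -/
open Finset

/-- `(m+1) * C(m,k) = (m+1-k) * C(m+1,k)` -/
lemma aux_choose (m k : ℕ) : (m + 1) * m.choose k = (m + 1 - k) * (m + 1).choose k := by
  have h1 := Nat.add_one_mul_choose_eq m k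
  have h2 := Nat.choose_succ_right_eq (m + 1) k
  simpa [mul_comm] using h1.trans h2

/-- `(m+1) * C(2(m+1), m+1) = 2(2m+1) C(2m, m)` -/
lemma aux_central (m : ℕ) :
    (m + 1) * (2 * (m + 1)).choose (m + 1) = 2 * (2 * m + 1) * ((2 * m).choose m) := by
  have := Nat.succ_mul_centralBinom_succ m
  simpa [Nat.centralBinom_eq_two_mul_choose] using this

/-- key coefficient identity ★★ -/
lemma star2 (n k : ℕ) :
    (n + 2) ^ 2 * (n + 2).choose k
      = (2 * k + 1) * (n + 2 - k) * (n + 2).choose k + k ^ 2 * (n + 2).choose k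
        + (n + 1) * (n + 2) * n.choose k := by
  have h : (n + 1) * (n + 2) * n.choose k = (n + 2 - k) * (n + 1 - k) * (n + 2).choose k := by
    have h1 := aux_choose n k
    have h2 := aux_choose (n + 1) k
    calc (n + 1) * (n + 2) * n.choose k = (n + 2) * ((n + 1) * n.choose k) := by ring
    _ = (n + 2) * ((n + 1 - k) * (n + 1).choose k) := by rw [h1]
    _ = (n + 1 - k) * ((n + 2) * (n + 1).choose k) := by ring
    _ = (n + 1 - k) * ((n + 2 - k) * (n + 2).choose k) := by
        rw [show n + 1 + 1 = n + 2 from rfl] at h2; rw [h2]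
    _ = _ := by ring
  rw [h]
  rcases lt_trichotomy k (n + 2) with hk | hk | hk
  · obtain ⟨d, hd⟩ : ∃ d, n + 1 = k + d := ⟨n + 1 - k, by omega⟩
    rw [show n + 2 - k = d + 1 by omega, show n + 1 - k = d by omega,
      show n + 2 = k + d + 1 by omega]
    ring
  · subst hk
    simp [Nat.sub_self]
  · have h0 : (n + 2).choose k = 0 := Nat.choose_eq_zero_of_lt hk
    simp [h0]

/-- key identity ★ (WZ-style) over ℕ -/
lemma star (n k : ℕ) :
    2 * (n + 2) ^ 2 * (n + 2).choose k * (2 * k).choose k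
      = (k + 1) ^ 2 * (n + 2).choose (k + 1) * (2 * (k + 1)).choose (k + 1)
        + 2 * k ^ 2 * (n + 2).choose k * (2 * k).choose k
        + 2 * (n + 1) * (n + 2) * n.choose k * (2 * k).choose k := by
  have hc := aux_central k
  have hb := Nat.choose_succ_right_eq (n + 2) k
  have h2 := star2 n k
  calc 2 * (n + 2) ^ 2 * (n + 2).choose k * (2 * k).choose k
      = 2 * ((n + 2) ^ 2 * (n + 2).choose k) * (2 * k).choose k := by ring
    _ = 2 * ((2 * k + 1) * (n + 2 - k) * (n + 2).choose k + k ^ 2 * (n + 2).choose k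
          + (n + 1) * (n + 2) * n.choose k) * (2 * k).choose k := by rw [h2]
    _ = ((n + 2).choose k * (n + 2 - k)) * (2 * (2 * k + 1) * ((2 * k).choose k))
          + 2 * k ^ 2 * (n + 2).choose k * (2 * k).choose k
          + 2 * (n + 1) * (n + 2) * n.choose k * (2 * k).choose k := by ring
    _ = ((n + 2).choose (k + 1) * (k + 1)) * ((k + 1) * (2 * (k + 1)).choose (k + 1))
          + 2 * k ^ 2 * (n + 2).choose k * (2 * k).choose k
          + 2 * (n + 1) * (n + 2) * n.choose k * (2 * k).choose k := by rw [hb, hc]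
    _ = _ := by ring

/-- the WZ certificate function -/
def Gfun (n k : ℕ) : ℚ :=
  -((-1 : ℚ) ^ k * k ^ 2 * (((n + 2).choose k : ℕ) : ℚ) * (((2 * k).choose k : ℕ) : ℚ))
    / (2 ^ k * (n + 2))

/-- the inner companion sum -/
def Aq (m : ℕ) : ℚ :=
  ∑ k ∈ Finset.range (m + 1), (-1 : ℚ) ^ k * (m.choose k) * ((2 * k).choose k) / 2 ^ k

lemma ptwise (n k : ℕ) :
    ((n : ℚ) + 2) * ((-1 : ℚ) ^ k * ((n + 2).choose k) * ((2 * k).choose k) / 2 ^ k)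
      - ((n : ℚ) + 1) * ((-1 : ℚ) ^ k * (n.choose k) * ((2 * k).choose k) / 2 ^ k)
      = Gfun n (k + 1) - Gfun n k := by
  have h : (2 * ((n : ℚ) + 2) ^ 2 * ((n + 2).choose k) * ((2 * k).choose k) : ℚ)
      = ((k : ℚ) + 1) ^ 2 * ((n + 2).choose (k + 1)) * ((2 * (k + 1)).choose (k + 1))
        + 2 * (k : ℚ) ^ 2 * ((n + 2).choose k) * ((2 * k).choose k)
        + 2 * ((n : ℚ) + 1) * ((n : ℚ) + 2) * (n.choose k) * ((2 * k).choose k) := by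
    exact_mod_cast congrArg (Nat.cast : ℕ → ℚ) (star n k)
  unfold Gfun
  have h2 : (2 : ℚ) ^ k ≠ 0 := by positivity
  have hn : ((n : ℚ) + 2) ≠ 0 := by positivity
  push_cast
  rw [pow_succ]
  field_simp
  linear_combination (2:ℚ)^k * h

lemma stepA (n : ℕ) : ((n : ℚ) + 2) * Aq (n + 2) = ((n : ℚ) + 1) * Aq n := by
  have tele : ∑ k ∈ Finset.range (n + 3), (Gfun n (k + 1) - Gfun n k)
      = Gfun n (n + 3) - Gfun n 0 := Finset.sum_range_sub (Gfun n) (n + 3)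
  have g0 : Gfun n 0 = 0 := by simp [Gfun]
  have gtop : Gfun n (n + 3) = 0 := by
    have h0 : (n + 2).choose (n + 3) = 0 := Nat.choose_eq_zero_of_lt (by omega)
    simp [Gfun, h0]
  have hsum : ∑ k ∈ Finset.range (n + 3),
      (((n : ℚ) + 2) * ((-1 : ℚ) ^ k * ((n + 2).choose k) * ((2 * k).choose k) / 2 ^ k)
        - ((n : ℚ) + 1) * ((-1 : ℚ) ^ k * (n.choose k) * ((2 * k).choose k) / 2 ^ k)) = 0 := by
    rw [Finset.sum_congr rfl (fun k _ => ptwise n k), tele, g0, gtop]; ring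
  rw [Finset.sum_sub_distrib, ← Finset.mul_sum, ← Finset.mul_sum] at hsum
  have e1 : ∑ k ∈ Finset.range (n + 3),
      (-1 : ℚ) ^ k * ((n + 2).choose k) * ((2 * k).choose k) / 2 ^ k = Aq (n + 2) := rfl
  have e2 : ∑ k ∈ Finset.range (n + 3),
      (-1 : ℚ) ^ k * (n.choose k) * ((2 * k).choose k) / 2 ^ k = Aq n := by
    rw [show n + 3 = (n + 1) + 1 + 1 from rfl, Finset.sum_range_succ, Finset.sum_range_succ]
    have c1 : n.choose (n + 1) = 0 := Nat.choose_eq_zero_of_lt (by omega)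
    have c2 : n.choose (n + 2) = 0 := Nat.choose_eq_zero_of_lt (by omega)
    simp [Aq, c1, c2]
  rw [e1, e2] at hsum
  linarith

lemma Aeven : ∀ m : ℕ, Aq (2 * m) = (((2 * m).choose m : ℕ) : ℚ) / 4 ^ m := by
  intro m
  induction m with
  | zero => norm_num [Aq]
  | succ m IH =>
    have hs := stepA (2 * m)
    rw [IH] at hs
    have hc : ((m : ℚ) + 1) * ((2 * (m + 1)).choose (m + 1))
        = 2 * (2 * (m : ℚ) + 1) * ((2 * m).choose m) := by
      exact_mod_cast congrArg (Nat.cast : ℕ → ℚ) (aux_central m)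
    have h4 : (4 : ℚ) ^ m ≠ 0 := by positivity
    have h2 : (2 * (m : ℚ) + 2) ≠ 0 := by positivity
    rw [show 2 * (m + 1) = 2 * m + 2 from by ring]
    rw [show 2 * (m + 1) = 2 * m + 2 from by ring] at hc
    push_cast at hs
    rw [eq_div_iff (by positivity : (4 : ℚ) ^ (m + 1) ≠ 0)]
    have hx : Aq (2 * m + 2) = (2 * (m : ℚ) + 1) * ((2 * m).choose m) / ((2 * m + 2) * 4 ^ m) := by
      field_simp at hs ⊢
      linarith
    rw [hx]
    field_simp
    push_cast
    linear_combination (-2 * (4 : ℚ) ^ m) * hc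

lemma Aodd : ∀ m : ℕ, Aq (2 * m + 1) = 0 := by
  intro m
  induction m with
  | zero => norm_num [Aq, Finset.sum_range_succ]
  | succ m IH =>
    have hs := stepA (2 * m + 1)
    rw [IH, mul_zero] at hs
    have h2 : ((2 * m + 1 : ℕ) : ℚ) + 2 ≠ 0 := by positivity
    have := (mul_eq_zero.mp hs).resolve_left h2
    rw [show 2 * (m + 1) + 1 = 2 * m + 1 + 2 from by ring]
    exact this

/-- the main sum -/
def Tq (n : ℕ) : ℚ :=
  ∑ k ∈ Finset.range n, (-1 : ℚ) ^ k * (n.choose (k + 1)) * ((2 * k).choose k) / 2 ^ k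

lemma Tsucc (n : ℕ) : Tq (n + 1) = Tq n + Aq n := by
  unfold Tq Aq
  have split : ∑ k ∈ Finset.range (n + 1),
      (-1 : ℚ) ^ k * ((n + 1).choose (k + 1)) * ((2 * k).choose k) / 2 ^ k
      = ∑ k ∈ Finset.range (n + 1),
        ((-1 : ℚ) ^ k * (n.choose (k + 1)) * ((2 * k).choose k) / 2 ^ k
          + (-1 : ℚ) ^ k * (n.choose k) * ((2 * k).choose k) / 2 ^ k) := by
    refine Finset.sum_congr rfl (fun k _ => ?_)
    have : ((n + 1).choose (k + 1) : ℚ) = (n.choose k : ℚ) + (n.choose (k + 1) : ℚ) := by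
      exact_mod_cast congrArg (Nat.cast : ℕ → ℚ) (Nat.choose_succ_succ n k)
    rw [this]; ring
  rw [split, Finset.sum_add_distrib, Finset.sum_range_succ]
  have c1 : n.choose (n + 1) = 0 := Nat.choose_eq_zero_of_lt (by omega)
  simp [c1]

lemma Tval : ∀ ν : ℕ, Tq (2 * ν + 1) = (2 * (ν : ℚ) + 1) * (((2 * ν).choose ν : ℕ) : ℚ) / 4 ^ ν := by
  intro ν
  induction ν with
  | zero => norm_num [Tq]
  | succ ν IH =>
    have h1 := Tsucc (2 * ν + 1)
    have h2 := Tsucc (2 * ν + 1 + 1)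
    have hodd := Aodd ν
    have heven : Aq (2 * ν + 1 + 1) = (((2 * (ν + 1)).choose (ν + 1) : ℕ) : ℚ) / 4 ^ (ν + 1) := by
      rw [show 2 * ν + 1 + 1 = 2 * (ν + 1) from by ring]; exact Aeven (ν + 1)
    rw [show 2 * (ν + 1) + 1 = 2 * ν + 1 + 1 + 1 from by ring, h2, h1, IH, hodd, heven]
    have hc : ((ν : ℚ) + 1) * ((2 * (ν + 1)).choose (ν + 1))
        = 2 * (2 * (ν : ℚ) + 1) * ((2 * ν).choose ν) := by
      exact_mod_cast congrArg (Nat.cast : ℕ → ℚ) (aux_central ν)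
    push_cast
    have h4 : (4 : ℚ) ^ ν ≠ 0 := by positivity
    have h4' : (4 : ℚ) ^ (ν + 1) ≠ 0 := by positivity
    have key : (2 * (ν : ℚ) + 1) * (((2 * ν).choose ν : ℕ) : ℚ) / 4 ^ ν
        = (2 * (ν : ℚ) + 2) * (((2 * (ν + 1)).choose (ν + 1) : ℕ) : ℚ) / 4 ^ (ν + 1) := by
      rw [div_eq_div_iff h4 h4', pow_succ]
      push_cast
      linear_combination (-2 * (4 : ℚ) ^ ν) * hc
    linear_combination key

lemma poch (ν : ℕ) : (ascPochhammer ℚ ν).eval (1 / 2) * 4 ^ ν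
    = (((2 * ν).choose ν : ℕ) : ℚ) * (ascPochhammer ℚ ν).eval 1 := by
  induction ν with
  | zero => simp
  | succ ν IH =>
    have hc : ((ν : ℚ) + 1) * ((2 * (ν + 1)).choose (ν + 1))
        = 2 * (2 * (ν : ℚ) + 1) * ((2 * ν).choose ν) := by
      exact_mod_cast congrArg (Nat.cast : ℕ → ℚ) (aux_central ν)
    rw [ascPochhammer_succ_right]
    simp only [Polynomial.eval_mul, Polynomial.eval_add, Polynomial.eval_X,
      Polynomial.eval_natCast]
    linear_combination (2 + 4 * (ν : ℚ)) * IH - (ascPochhammer ℚ ν).eval 1 * hc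

/-- Identity (3.3): the even case of Theorem 2.1 with `i = 1`,
equivalent to Riordan's identity (1.6). -/
theorem riordan_even_pochhammer (ν : ℕ) :
    ∑ k ∈ Finset.range (2 * ν + 1),
      (-1 : ℚ) ^ k * ((2 * ν + 1).choose (k + 1)) * ((2 * k).choose k) / 2 ^ k
      = (2 * ν + 1) * (ascPochhammer ℚ ν).eval (1 / 2) / (ascPochhammer ℚ ν).eval 1 := by
  have e1ne : (ascPochhammer ℚ ν).eval 1 ≠ 0 := by
    rw [ascPochhammer_eval_one]
    exact_mod_cast ν.factorial_ne_zero
  have hP := poch ν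
  have hT := Tval ν
  calc ∑ k ∈ Finset.range (2 * ν + 1),
      (-1 : ℚ) ^ k * ((2 * ν + 1).choose (k + 1)) * ((2 * k).choose k) / 2 ^ k
      = Tq (2 * ν + 1) := rfl
    _ = (2 * (ν : ℚ) + 1) * (((2 * ν).choose ν : ℕ) : ℚ) / 4 ^ ν := hT
    _ = (2 * ν + 1) * (ascPochhammer ℚ ν).eval (1 / 2) / (ascPochhammer ℚ ν).eval 1 := by
      rw [div_eq_div_iff (by positivity) e1ne]
      push_cast
      linear_combination (-(2 * (ν : ℚ) + 1)) * hP
end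

section
/- For every natural number ν, ∑_{k=0}^{2ν+1} (−1)^k · C(2ν+3, k+2) · 2^{−k} · C(2k, k) = 2 · (5/2)_ν / (1)_ν, with the sum taken over rational (or real) numbers. -/
namespace Thm21Aux

/-- the summand -/
def T (ν k : ℕ) : ℚ :=
  (-1 : ℚ) ^ k * ((2 * ν + 3).choose (k + 2)) * ((2 * k).choose k) / 2 ^ k

/-- the telescoping certificate -/
def G (ν k : ℕ) : ℚ :=
  (-1 : ℚ) ^ k * k * ((k : ℚ) ^ 2 - (4 * ν + 7) * k - (6 * ν + 14)) *
    ((2 * ν + 5).choose k) * ((2 * k).choose k) / (2 ^ k * ((k : ℚ) + 1))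

lemma cast_absorb (n k : ℕ) :
    ((n.choose (k + 1) : ℚ)) * (k + 1) = (n.choose k : ℚ) * ((n : ℚ) - k) := by
  rcases le_or_gt k n with h | h
  · have h2 := Nat.choose_succ_right_eq n k
    have : ((n - k : ℕ) : ℚ) = (n : ℚ) - k := by
      rw [Nat.cast_sub h]
    rw [← this]
    exact_mod_cast congrArg (Nat.cast : ℕ → ℚ) h2
  · rw [Nat.choose_eq_zero_of_lt h, Nat.choose_eq_zero_of_lt (by omega)]
    push_cast
    ring

lemma cast_succ_row (n k : ℕ) :
    (n.choose k : ℚ) * ((n : ℚ) + 1) = ((n + 1).choose k : ℚ) * ((n : ℚ) + 1 - k) := by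
  rcases le_or_gt k (n + 1) with h | h
  · have h2 := Nat.choose_mul_succ_eq n k
    have : ((n + 1 - k : ℕ) : ℚ) = (n : ℚ) + 1 - k := by
      rw [Nat.cast_sub h]; push_cast; ring
    rw [← this]
    exact_mod_cast congrArg (Nat.cast : ℕ → ℚ) h2
  · rw [Nat.choose_eq_zero_of_lt h, Nat.choose_eq_zero_of_lt (by omega)]
    push_cast
    ring

lemma cast_cb (k : ℕ) :
    ((k : ℚ) + 1) * ((2 * k + 2).choose (k + 1) : ℚ)
      = 2 * (2 * (k : ℚ) + 1) * ((2 * k).choose k : ℚ) := by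
  have h := Nat.succ_mul_centralBinom_succ k
  have h2 : (k + 1) * (2 * (k + 1)).choose (k + 1) = 2 * (2 * k + 1) * (2 * k).choose k := h
  have h3 : 2 * (k + 1) = 2 * k + 2 := by ring
  rw [h3] at h2
  exact_mod_cast congrArg (Nat.cast : ℕ → ℚ) h2

/-- The key termwise telescoping identity. -/
lemma key (ν k : ℕ) :
    (2 * (ν : ℚ) + 4) * (2 * ν + 5) * T (ν + 2) k
      - (8 * (ν : ℚ) ^ 2 + 36 * ν + 43) * T (ν + 1) k
      + (2 * (ν : ℚ) + 4) * (2 * ν + 5) * T ν k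
      = G ν (k + 1) - G ν k := by
  have hx1 : ((k : ℚ) + 1) ≠ 0 := by positivity
  have hx2 : ((k : ℚ) + 2) ≠ 0 := by positivity
  have hm4 : (2 * (ν : ℚ) + 4) ≠ 0 := by positivity
  have hm5 : (2 * (ν : ℚ) + 5) ≠ 0 := by positivity
  have hp : (2 : ℚ) ^ k ≠ 0 := by positivity
  -- abbreviations
  set a : ℚ := ((2 * ν + 5).choose k : ℚ) with ha
  set b : ℚ := ((2 * k).choose k : ℚ) with hb
  -- u1 = C(2k+2, k+1)
  have e1 : ((2 * k + 2).choose (k + 1) : ℚ) = 2 * (2 * (k : ℚ) + 1) * b / ((k : ℚ) + 1) := by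
    rw [eq_div_iff hx1]
    have := cast_cb k
    linarith [cast_cb k]
  -- u2 = C(2ν+5, k+1)
  have e2 : ((2 * ν + 5).choose (k + 1) : ℚ) = a * (2 * (ν : ℚ) + 5 - k) / ((k : ℚ) + 1) := by
    rw [eq_div_iff hx1]
    have h := cast_absorb (2 * ν + 5) k
    rw [← ha] at h
    push_cast at h ⊢
    linarith
  -- u3 = C(2ν+5, k+2)
  have e3 : ((2 * ν + 5).choose (k + 2) : ℚ)
      = a * (2 * (ν : ℚ) + 5 - k) * (2 * (ν : ℚ) + 4 - k) / (((k : ℚ) + 1) * ((k : ℚ) + 2)) := by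
    have h := cast_absorb (2 * ν + 5) (k + 1)
    rw [show k + 1 + 1 = k + 2 from rfl] at h
    push_cast at h
    rw [e2] at h
    field_simp at h ⊢
    linarith
  -- u7 = C(2ν+4, k+2) : (2ν+5) u7 = u3 * (2ν+3-k)
  have e7 : ((2 * ν + 4).choose (k + 2) : ℚ)
      = ((2 * ν + 5).choose (k + 2) : ℚ) * (2 * (ν : ℚ) + 3 - k) / (2 * (ν : ℚ) + 5) := by
    rw [eq_div_iff hm5]
    have h := cast_succ_row (2 * ν + 4) (k + 2)
    rw [show 2 * ν + 4 + 1 = 2 * ν + 5 from rfl] at h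
    push_cast at h
    linarith
  -- u8 = C(2ν+3, k+2)
  have e8 : ((2 * ν + 3).choose (k + 2) : ℚ)
      = ((2 * ν + 4).choose (k + 2) : ℚ) * (2 * (ν : ℚ) + 2 - k) / (2 * (ν : ℚ) + 4) := by
    rw [eq_div_iff hm4]
    have h := cast_succ_row (2 * ν + 3) (k + 2)
    rw [show 2 * ν + 3 + 1 = 2 * ν + 4 from rfl] at h
    push_cast at h
    linarith
  -- u4 = C(2ν+7, k+2) = a + 2 u2 + u3 via Pascal
  have e4 : ((2 * ν + 7).choose (k + 2) : ℚ)
      = a + 2 * ((2 * ν + 5).choose (k + 1) : ℚ) + ((2 * ν + 5).choose (k + 2) : ℚ) := by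
    have p1 : (2 * ν + 7).choose (k + 2) = (2 * ν + 6).choose (k + 1) + (2 * ν + 6).choose (k + 2) :=
      Nat.choose_succ_succ (2 * ν + 6) (k + 1)
    have p2 : (2 * ν + 6).choose (k + 1) = (2 * ν + 5).choose k + (2 * ν + 5).choose (k + 1) :=
      Nat.choose_succ_succ (2 * ν + 5) k
    have p3 : (2 * ν + 6).choose (k + 2) = (2 * ν + 5).choose (k + 1) + (2 * ν + 5).choose (k + 2) :=
      Nat.choose_succ_succ (2 * ν + 5) (k + 1)
    rw [p1, p2, p3, ha]
    push_cast
    ring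
  -- now substitute everything
  simp only [T, G]
  have idx : 2 * (k + 1) = 2 * k + 2 := by ring
  have i2 : 2 * (ν + 2) + 3 = 2 * ν + 7 := by ring
  have i1 : 2 * (ν + 1) + 3 = 2 * ν + 5 := by ring
  rw [idx, i2, i1, e8, e7, e4, e3, e2, e1, ← hb]
  have hpow1 : ((-1 : ℚ)) ^ (k + 1) = -(-1 : ℚ) ^ k := by rw [pow_succ]; ring
  have hpow2 : ((2 : ℚ)) ^ (k + 1) = 2 * 2 ^ k := by rw [pow_succ]; ring
  rw [hpow1, hpow2]
  push_cast
  field_simp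
  ring

/-- terms vanish beyond the range -/
lemma T_eq_zero {ν k : ℕ} (h : 2 * ν + 2 ≤ k) : T ν k = 0 := by
  have : (2 * ν + 3).choose (k + 2) = 0 := Nat.choose_eq_zero_of_lt (by omega)
  simp [T, this]

lemma sum_ext (ν N : ℕ) (h : 2 * ν + 2 ≤ N) :
    ∑ k ∈ Finset.range N, T ν k = ∑ k ∈ Finset.range (2 * ν + 2), T ν k := by
  rw [← Finset.sum_subset (Finset.range_subset_range.2 h)]
  intro x hx hx2
  exact T_eq_zero (by simp at hx2; omega)

lemma G_zero (ν : ℕ) : G ν 0 = 0 := by simp [G]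

lemma G_top (ν : ℕ) : G ν (2 * ν + 6) = 0 := by
  have : (2 * ν + 5).choose (2 * ν + 6) = 0 := Nat.choose_eq_zero_of_lt (by omega)
  simp [G, this]

/-- the three-term recurrence for the sums -/
lemma sum_rec (ν : ℕ) :
    (2 * (ν : ℚ) + 4) * (2 * ν + 5) * (∑ k ∈ Finset.range (2 * (ν + 2) + 2), T (ν + 2) k)
      - (8 * (ν : ℚ) ^ 2 + 36 * ν + 43) * (∑ k ∈ Finset.range (2 * (ν + 1) + 2), T (ν + 1) k)
      + (2 * (ν : ℚ) + 4) * (2 * ν + 5) * (∑ k ∈ Finset.range (2 * ν + 2), T ν k) = 0 := by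
  have h2 := (sum_ext (ν + 2) (2 * ν + 6) (by omega)).symm
  have h1 := (sum_ext (ν + 1) (2 * ν + 6) (by omega)).symm
  have h0 := (sum_ext ν (2 * ν + 6) (by omega)).symm
  rw [show 2 * (ν + 2) + 2 = 2 * (ν + 2) + 2 from rfl] at h2
  rw [h2, h1, h0, Finset.mul_sum, Finset.mul_sum, Finset.mul_sum, ← Finset.sum_sub_distrib,
    ← Finset.sum_add_distrib]
  have hc : ∀ k ∈ Finset.range (2 * ν + 6),
      (2 * (ν : ℚ) + 4) * (2 * ν + 5) * T (ν + 2) k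
        - (8 * (ν : ℚ) ^ 2 + 36 * ν + 43) * T (ν + 1) k
        + (2 * (ν : ℚ) + 4) * (2 * ν + 5) * T ν k = G ν (k + 1) - G ν k := fun k _ => key ν k
  rw [Finset.sum_congr rfl hc, Finset.sum_range_sub (G ν), G_zero, G_top]
  ring

lemma asc_one_pos (ν : ℕ) : (0 : ℚ) < (ascPochhammer ℚ ν).eval 1 := by
  induction ν with
  | zero => simp
  | succ n ih =>
    rw [ascPochhammer_succ_eval]
    positivity

end Thm21Aux

/-- Identity (3.6): the odd case of Theorem 2.1 with `i = 2`. -/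
theorem theorem_2_1_odd_i_two (ν : ℕ) :
    ∑ k ∈ Finset.range (2 * ν + 2),
      (-1 : ℚ) ^ k * ((2 * ν + 3).choose (k + 2)) * ((2 * k).choose k) / 2 ^ k
      = 2 * (ascPochhammer ℚ ν).eval (5 / 2) / (ascPochhammer ℚ ν).eval 1 := by
  show ∑ k ∈ Finset.range (2 * ν + 2), Thm21Aux.T ν k = _
  induction ν using Nat.strong_induction_on with
  | _ n ih =>
    match n, ih with
    | 0, _ => simp [Thm21Aux.T, Finset.sum_range_succ]; norm_num
    | 1, _ =>
      simp [Thm21Aux.T, Finset.sum_range_succ, ascPochhammer_succ_eval]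
      norm_num [Nat.choose]
    | (m + 2), ih =>
      have h0 := ih m (by omega)
      have h1 := ih (m + 1) (by omega)
      have hrec := Thm21Aux.sum_rec m
      rw [h0, h1] at hrec
      have hm1 : (0 : ℚ) < (ascPochhammer ℚ m).eval 1 := Thm21Aux.asc_one_pos m
      have hne : ((ascPochhammer ℚ m).eval 1 : ℚ) ≠ 0 := ne_of_gt hm1
      have hA : (2 * (m : ℚ) + 4) * (2 * (m : ℚ) + 5) ≠ 0 := by positivity
      have e1 : (ascPochhammer ℚ (m + 1)).eval (5/2 : ℚ)
          = (ascPochhammer ℚ m).eval (5/2) * (5/2 + (m : ℚ)) := by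
        rw [ascPochhammer_succ_eval]
      have e2 : (ascPochhammer ℚ (m + 2)).eval (5/2 : ℚ)
          = (ascPochhammer ℚ m).eval (5/2) * (5/2 + (m : ℚ)) * (5/2 + ((m : ℚ) + 1)) := by
        rw [show m + 2 = (m + 1) + 1 from rfl, ascPochhammer_succ_eval, ascPochhammer_succ_eval]
        push_cast
        ring
      have e3 : (ascPochhammer ℚ (m + 1)).eval (1 : ℚ)
          = (ascPochhammer ℚ m).eval 1 * (1 + (m : ℚ)) := by
        rw [ascPochhammer_succ_eval]
      have e4 : (ascPochhammer ℚ (m + 2)).eval (1 : ℚ)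
          = (ascPochhammer ℚ m).eval 1 * (1 + (m : ℚ)) * (1 + ((m : ℚ) + 1)) := by
        rw [show m + 2 = (m + 1) + 1 from rfl, ascPochhammer_succ_eval, ascPochhammer_succ_eval]
        push_cast
        ring
      rw [e1, e3] at hrec
      rw [e2, e4]
      set S := ∑ k ∈ Finset.range (2 * (m + 2) + 2), Thm21Aux.T (m + 2) k with hSdef
      have hS : S = ((8 * (m : ℚ) ^ 2 + 36 * m + 43)
            * (2 * ((ascPochhammer ℚ m).eval (5/2) * (5/2 + (m : ℚ)))
                / ((ascPochhammer ℚ m).eval 1 * (1 + (m : ℚ))))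
          - (2 * (m : ℚ) + 4) * (2 * (m : ℚ) + 5)
            * (2 * (ascPochhammer ℚ m).eval (5/2) / (ascPochhammer ℚ m).eval 1))
          / ((2 * (m : ℚ) + 4) * (2 * (m : ℚ) + 5)) := by
        rw [eq_div_iff hA]
        linear_combination hrec
      rw [hS]
      have h1m : (1 + (m : ℚ)) ≠ 0 := by positivity
      have h2m : (1 + ((m : ℚ) + 1)) ≠ 0 := by positivity
      field_simp
      ring
end

section
/- For every natural number ν, ∑_{k=0}^{2ν} (−1)^k · C(2ν+3, k+3) · 2^{−k} · C(2k, k) = (1/5) · (8ν+5) · (5/2)_ν / (1)_ν, with the sum taken over rational (or real) numbers. -/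
noncomputable section AuxT21

def Tm (n i k : ℕ) : ℚ := (-1 : ℚ)^k * (n.choose (k+i)) * ((2*k).choose k) / 2^k

def Am (n i : ℕ) : ℚ := ∑ k ∈ Finset.range (n+1), Tm n i k

lemma Tm_zero {n i k : ℕ} (h : n < k + i) : Tm n i k = 0 := by
  simp [Tm, Nat.choose_eq_zero_of_lt h]

lemma Am_ext (n i N : ℕ) (h : n + 1 ≤ N) :
    ∑ k ∈ Finset.range N, Tm n i k = Am n i := by
  rw [Am, Finset.sum_subset (Finset.range_subset_range.2 h)]
  intro k _ hk
  simp only [Finset.mem_range, not_lt] at hk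
  exact Tm_zero (by omega)

lemma pascal (n i : ℕ) : Am (n+1) (i+1) = Am n (i+1) + Am n i := by
  rw [Am, Finset.sum_range_succ, Tm_zero (by omega), add_zero]
  rw [Am, Am, ← Finset.sum_add_distrib]
  refine Finset.sum_congr rfl fun k _ => ?_
  simp only [Tm]
  have h : (n+1).choose (k+(i+1)) = n.choose (k+i) + n.choose (k+i+1) :=
    Nat.choose_succ_succ n (k+i)
  rw [h]
  push_cast
  ring

lemma cb_cast (k : ℕ) :
    ((k:ℚ)+1) * ((2*(k+1)).choose (k+1)) = 2*(2*(k:ℚ)+1) * ((2*k).choose k) := by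
  have h := Nat.succ_mul_centralBinom_succ k
  have h' : (k+1) * ((2*(k+1)).choose (k+1)) = 2*(2*k+1) * ((2*k).choose k) := by
    simpa [Nat.centralBinom] using h
  exact_mod_cast h'

lemma ch1_cast (m k : ℕ) :
    ((k:ℚ)+1) * (m.choose (k+1)) = ((m:ℚ) - k) * (m.choose k) := by
  rcases lt_or_ge k m with h | h
  · have h2 := Nat.choose_succ_right_eq m k
    have h2q : (m.choose (k+1) : ℚ) * ((k:ℚ)+1) = (m.choose k : ℚ) * ((m - k : ℕ) : ℚ) := by
      exact_mod_cast h2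
    rw [Nat.cast_sub h.le] at h2q
    linarith [h2q]
  · rcases eq_or_lt_of_le h with rfl | h'
    · simp [Nat.choose_eq_zero_of_lt (Nat.lt_succ_self _)]
    · have e1 : m.choose (k+1) = 0 := Nat.choose_eq_zero_of_lt (by omega)
      have e2 : m.choose k = 0 := Nat.choose_eq_zero_of_lt h'
      simp [e1, e2]

lemma ch2_cast (n k : ℕ) :
    ((n:ℚ)+1) * (n.choose k) = ((n:ℚ)+1-k) * ((n+1).choose k) := by
  have a : ((n+1) * n.choose k : ℕ) = ((n+1).choose (k+1) * (k+1) : ℕ) :=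
    Nat.add_one_mul_choose_eq n k
  have aq : ((n:ℚ)+1) * (n.choose k) = ((n+1).choose (k+1) : ℚ) * ((k:ℚ)+1) := by
    exact_mod_cast a
  have b := ch1_cast (n+1) k
  push_cast at b ⊢
  linarith [aq, b]

lemma rec0 (n : ℕ) : ((n:ℚ)+2) * Am (n+2) 0 = ((n:ℚ)+1) * Am n 0 := by
  set g : ℕ → ℚ := fun k => -(k:ℚ)^2 * (-1:ℚ)^k * ((n+2).choose k) * ((2*k).choose k) / 2^k
    with hg
  have key : ∀ k : ℕ, ((n:ℚ)+2) * (((n:ℚ)+2) * Tm (n+2) 0 k - ((n:ℚ)+1) * Tm n 0 k)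
      = g (k+1) - g k := by
    intro k
    have h1 := cb_cast k
    have h2 := ch1_cast (n+2) k
    have h3 := ch2_cast n k
    have h3' := ch2_cast (n+1) k
    have h3'' : ((n:ℚ)+1)*((n:ℚ)+2) * (n.choose k)
        = ((n:ℚ)+1-k)*((n:ℚ)+2-k) * ((n+2).choose k) := by
      push_cast at h3 h3' ⊢
      linear_combination ((n:ℚ)+2) * h3 + ((n:ℚ)+1-(k:ℚ)) * h3'
    simp only [Tm, hg, Nat.add_zero, add_zero, pow_succ]
    push_cast at h1 h2 h3'' ⊢
    linear_combination
      (-((((k:ℚ)+1) * ((2*(k+1)).choose (k+1) : ℚ)) * (-1:ℚ)^k) / (2*(2:ℚ)^k)) * h2 +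
      (-(((((n:ℚ)+2-(k:ℚ))) * (((n+2).choose k : ℚ))) * (-1:ℚ)^k) / (2*(2:ℚ)^k)) * h1 +
      (-((2*(((2*k).choose k : ℚ))) * (-1:ℚ)^k) / (2*(2:ℚ)^k)) * h3''
  have hsum : ∑ k ∈ Finset.range (n+3),
      ((n:ℚ)+2) * (((n:ℚ)+2)*Tm (n+2) 0 k - ((n:ℚ)+1)*Tm n 0 k) = g (n+3) - g 0 := by
    rw [← Finset.sum_range_sub g]
    exact Finset.sum_congr rfl fun k _ => key k
  have hg0 : g 0 = 0 := by simp [hg]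
  have hgN : g (n+3) = 0 := by
    simp [hg, Nat.choose_eq_zero_of_lt (by omega : n + 2 < n + 3)]
  have hA2 : ∑ k ∈ Finset.range (n+3), Tm (n+2) 0 k = Am (n+2) 0 := Am_ext _ _ _ (by omega)
  have hA0 : ∑ k ∈ Finset.range (n+3), Tm n 0 k = Am n 0 := Am_ext _ _ _ (by omega)
  have expand : ∑ k ∈ Finset.range (n+3),
      ((n:ℚ)+2) * (((n:ℚ)+2) * Tm (n+2) 0 k - ((n:ℚ)+1) * Tm n 0 k)
      = ((n:ℚ)+2) * (((n:ℚ)+2) * (∑ k ∈ Finset.range (n+3), Tm (n+2) 0 k)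
          - ((n:ℚ)+1) * (∑ k ∈ Finset.range (n+3), Tm n 0 k)) := by
    rw [Finset.mul_sum, Finset.mul_sum, ← Finset.sum_sub_distrib, ← Finset.mul_sum]
  rw [expand, hA2, hA0, hg0, hgN, sub_zero] at hsum
  have hn2 : ((n:ℚ)+2) ≠ 0 := by positivity
  have h0 := mul_eq_zero.mp hsum
  rcases h0 with h | h
  · exact absurd h hn2
  · linarith [h]

def eP (x : ℚ) (ν : ℕ) : ℚ := (ascPochhammer ℚ ν).eval x

lemma eP_succ (x : ℚ) (ν : ℕ) : eP x (ν+1) = eP x ν * (x + ν) := by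
  simp [eP, ascPochhammer_succ_right, Polynomial.eval_mul]

lemma eP_zero (x : ℚ) : eP x 0 = 1 := by simp [eP]

lemma f_pos (ν : ℕ) : 0 < eP 1 ν := by
  induction ν with
  | zero => simp [eP_zero]
  | succ n ih => rw [eP_succ]; positivity

lemma E0 (ν : ℕ) : Am (2*ν) 0 * eP 1 ν = eP (1/2) ν := by
  induction ν with
  | zero => simp [Am, Tm, eP_zero]
  | succ m ih =>
    have hr := rec0 (2*m)
    rw [show 2*m+2 = 2*(m+1) from by ring] at hr
    rw [eP_succ, eP_succ]
    push_cast at hr ⊢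
    linear_combination (eP 1 m / 2) * hr + ((2*(m:ℚ)+1)/2) * ih

lemma O0 (ν : ℕ) : Am (2*ν+1) 0 = 0 := by
  induction ν with
  | zero => simp [Am, Tm, Finset.sum_range_succ]
  | succ m ih =>
    have hr := rec0 (2*m+1)
    rw [show 2*m+1+2 = 2*(m+1)+1 from by ring, ih, mul_zero] at hr
    have h5 : ((2*m+1:ℕ):ℚ)+2 ≠ 0 := by positivity
    exact (mul_eq_zero.mp hr).resolve_left h5

lemma E1 (ν : ℕ) : Am (2*ν+1) 1 * eP 1 ν = (2*(ν:ℚ)+1) * eP (1/2) ν := by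
  induction ν with
  | zero => simp [Am, Tm, Finset.sum_range_succ, eP_zero]
  | succ m ih =>
    have hp1 : Am (2*m+3) 1 = Am (2*m+2) 1 + Am (2*m+2) 0 := by
      have := pascal (2*m+2) 0; simpa using this
    have hp2 : Am (2*m+2) 1 = Am (2*m+1) 1 + Am (2*m+1) 0 := by
      have := pascal (2*m+1) 0; simpa using this
    have hE0m1 := E0 (m+1)
    rw [show 2*(m+1) = 2*m+2 from by ring] at hE0m1
    have hEq : Am (2*(m+1)+1) 1 = Am (2*m+1) 1 + Am (2*m+2) 0 := by
      rw [show 2*(m+1)+1 = 2*m+3 from by ring, hp1, hp2, O0 m]; ring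
    rw [hEq, eP_succ, eP_succ]
    rw [eP_succ, eP_succ] at hE0m1
    push_cast at ih hE0m1 ⊢
    linear_combination (1+(m:ℚ)) * ih + hE0m1

lemma O1 (ν : ℕ) : Am (2*ν+2) 1 * eP 1 ν = (2*(ν:ℚ)+1) * eP (1/2) ν := by
  have hp : Am (2*ν+2) 1 = Am (2*ν+1) 1 + Am (2*ν+1) 0 := by
    have := pascal (2*ν+1) 0; simpa using this
  rw [hp, O0 ν, add_zero]
  exact E1 ν

lemma E2 (ν : ℕ) : Am (2*ν+2) 2 * 3 * eP 1 ν = (4*(ν:ℚ)+3)*(2*(ν:ℚ)+1) * eP (1/2) ν := by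
  induction ν with
  | zero =>
    norm_num [Am, Tm, Finset.sum_range_succ, eP_zero, Nat.choose]
  | succ m ih =>
    have hp1 : Am (2*m+4) 2 = Am (2*m+3) 2 + Am (2*m+3) 1 := by
      have := pascal (2*m+3) 1; simpa using this
    have hp2 : Am (2*m+3) 2 = Am (2*m+2) 2 + Am (2*m+2) 1 := by
      have := pascal (2*m+2) 1; simpa using this
    have hO1 := O1 m
    have hE1 := E1 (m+1)
    rw [show 2*(m+1)+1 = 2*m+3 from by ring] at hE1
    rw [show 2*(m+1)+2 = 2*m+4 from by ring, hp1, hp2, eP_succ, eP_succ]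
    push_cast at ih hO1 hE1 ⊢
    rw [eP_succ, eP_succ] at hE1
    linear_combination (1+(m:ℚ)) * ih + (3*(1+(m:ℚ))) * hO1 + 3 * hE1

lemma O2 (ν : ℕ) : Am (2*ν+3) 2 * 3 * eP 1 ν = 2*(2*(ν:ℚ)+3)*(2*(ν:ℚ)+1) * eP (1/2) ν := by
  have hp : Am (2*ν+3) 2 = Am (2*ν+2) 2 + Am (2*ν+2) 1 := by
    have := pascal (2*ν+2) 1; simpa using this
  have h1 := E2 ν
  have h2 := O1 ν
  rw [hp]
  linear_combination h1 + 3 * h2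

lemma E3 (ν : ℕ) : Am (2*ν+3) 3 * 15 * eP 1 ν
    = (8*(ν:ℚ)+5)*(2*(ν:ℚ)+1)*(2*(ν:ℚ)+3) * eP (1/2) ν := by
  induction ν with
  | zero =>
    norm_num [Am, Tm, Finset.sum_range_succ, eP_zero, Nat.choose]
  | succ m ih =>
    have hp1 : Am (2*m+5) 3 = Am (2*m+4) 3 + Am (2*m+4) 2 := by
      have := pascal (2*m+4) 2; simpa using this
    have hp2 : Am (2*m+4) 3 = Am (2*m+3) 3 + Am (2*m+3) 2 := by
      have := pascal (2*m+3) 2; simpa using this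
    have hO2 := O2 m
    have hE2 := E2 (m+1)
    rw [show 2*(m+1)+2 = 2*m+4 from by ring] at hE2
    rw [show 2*(m+1)+3 = 2*m+5 from by ring, hp1, hp2, eP_succ, eP_succ]
    push_cast at ih hO2 hE2 ⊢
    rw [eP_succ, eP_succ] at hE2
    linear_combination (1+(m:ℚ)) * ih + (5*(1+(m:ℚ))) * hO2 + 5 * hE2

lemma h52 (ν : ℕ) : 3 * eP (5/2) ν = (2*(ν:ℚ)+1)*(2*(ν:ℚ)+3) * eP (1/2) ν := by
  induction ν with
  | zero => norm_num [eP_zero]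
  | succ m ih =>
    rw [eP_succ, eP_succ]
    push_cast at ih ⊢
    linear_combination ((5:ℚ)/2+(m:ℚ)) * ih

end AuxT21

/-- Identity (3.7): the even case of Theorem 2.1 with `i = 3`. -/
theorem theorem_2_1_even_i_three (ν : ℕ) :
    ∑ k ∈ Finset.range (2 * ν + 1),
      (-1 : ℚ) ^ k * ((2 * ν + 3).choose (k + 3)) * ((2 * k).choose k) / 2 ^ k
      = (1 / 5) * (8 * ν + 5) * (ascPochhammer ℚ ν).eval (5 / 2)
          / (ascPochhammer ℚ ν).eval 1 := by
  have hL : ∑ k ∈ Finset.range (2 * ν + 1),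
      (-1 : ℚ) ^ k * ((2 * ν + 3).choose (k + 3)) * ((2 * k).choose k) / 2 ^ k
      = Am (2*ν+3) 3 := by
    rw [← Am_ext (2*ν+3) 3 (2*ν+3+1) (le_refl _)]
    rw [Finset.sum_subset (Finset.range_subset_range.2 (by omega : 2*ν+1 ≤ 2*ν+3+1))]
    · exact Finset.sum_congr rfl fun k _ => rfl
    · intro k _ hk
      simp only [Finset.mem_range, not_lt] at hk
      exact Tm_zero (by omega)
  rw [hL]
  have hfne : (ascPochhammer ℚ ν).eval (1:ℚ) ≠ 0 := (f_pos ν).ne'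
  rw [eq_div_iff hfne]
  have hE3 := E3 ν
  have h5 := h52 ν
  simp only [eP] at hE3 h5
  linear_combination (1/15 : ℚ) * hE3 - ((8*(ν:ℚ)+5)/15) * h5
end
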